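/- arXiv:2405.02521 — 11 statements merged into one kernel-verified Lean document; each statement's English description precedes it below -/
import Mathlib

section
/- For all β, a, t ∈ ℝ, the squared modulus of the horocyclic geodesic satisfies |γ_{β,a}(t)|² = 1 − 4/(e^{−t} + 2 + (1+a²)e^{t}); in particular |γ_{β,a}(t)| < 1 for all t. -/
noncomputable section

/-- `x̂(t) = tanh(t/2)`. -/
def xhat (t : ℝ) : ℝ := Real.tanh (t / 2)

/-- Horocyclic parameterization of hyperbolic geodesics in the Poincaré disk. -/
def γH (β a t : ℝ) : ℂ :=
  Complex.exp (Complex.I * (β : ℂ)) *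
    (((2 + Complex.I * (a : ℂ)) * (xhat t : ℂ) + Complex.I * (a : ℂ)) /
      (Complex.I * (a : ℂ) * (xhat t : ℂ) - 2 + Complex.I * (a : ℂ)))

lemma xhat_eq (t : ℝ) : xhat t = (Real.exp t - 1) / (Real.exp t + 1) := by
  have h : Real.exp (t/2) * Real.exp (t/2) = Real.exp t := by
    rw [← Real.exp_add]; ring_nf
  have h1 : Real.exp (t/2) > 0 := Real.exp_pos _
  have h2 : Real.exp t + 1 > 0 := by positivity
  rw [xhat, Real.tanh_eq_sinh_div_cosh, Real.sinh_eq, Real.cosh_eq]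
  rw [Real.exp_neg]
  field_simp
  nlinarith [h, h1]

/-- `|γ_{β,a}(t)|² = 1 − 4/(e^{−t} + 2 + (1+a²)e^{t})`; in particular `|γ_{β,a}(t)| < 1`. -/
theorem horocyclic_modulus_sq (β a t : ℝ) :
    ‖γH β a t‖ ^ 2 =
      1 - 4 / (Real.exp (-t) + 2 + (1 + a ^ 2) * Real.exp t) ∧
    ‖γH β a t‖ < 1 := by
  have hE : Real.exp t > 0 := Real.exp_pos t
  set E := Real.exp t with hEdef
  set x : ℝ := xhat t with hx
  have hxE : x = (E - 1) / (E + 1) := xhat_eq t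
  have habs : ‖γH β a t‖ ^ 2 =
      (4 * x ^ 2 + a ^ 2 * (x + 1) ^ 2) / (4 + a ^ 2 * (x + 1) ^ 2) := by
    rw [γH, ← hx]
    rw [norm_mul, Complex.norm_exp]
    have hre : (Complex.I * (β : ℂ)).re = 0 := by simp
    rw [hre, Real.exp_zero, one_mul]
    rw [norm_div]
    rw [div_pow, Complex.sq_norm, Complex.sq_norm]
    have hnum : Complex.normSq ((2 + Complex.I * (a : ℂ)) * (x : ℂ) + Complex.I * (a : ℂ))
        = 4 * x ^ 2 + a ^ 2 * (x + 1) ^ 2 := by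
      simp [Complex.normSq_apply]; ring
    have hden : Complex.normSq (Complex.I * (a : ℂ) * (x : ℂ) - 2 + Complex.I * (a : ℂ))
        = 4 + a ^ 2 * (x + 1) ^ 2 := by
      simp [Complex.normSq_apply]; ring
    rw [hnum, hden]
  have hDpos : Real.exp (-t) + 2 + (1 + a ^ 2) * E > 0 := by
    have := Real.exp_pos (-t); nlinarith
  have hden2 : (4 : ℝ) + a ^ 2 * (x + 1) ^ 2 > 0 := by positivity
  have heq : ‖γH β a t‖ ^ 2 =
      1 - 4 / (Real.exp (-t) + 2 + (1 + a ^ 2) * E) := by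
    rw [habs, hxE, Real.exp_neg, ← hEdef]
    have hE1 : E + 1 > 0 := by linarith
    have hne : (4:ℝ) + a ^ 2 * ((E - 1) / (E + 1) + 1) ^ 2 ≠ 0 := by positivity
    have hD : E⁻¹ + 2 + (1 + a ^ 2) * E ≠ 0 := by
      rw [Real.exp_neg, ← hEdef] at hDpos; linarith
    field_simp
    ring
  refine ⟨heq, ?_⟩
  have h1 : ‖γH β a t‖ ^ 2 < 1 := by
    rw [heq]
    have : 4 / (Real.exp (-t) + 2 + (1 + a ^ 2) * E) > 0 := by positivity
    linarith
  nlinarith [norm_nonneg (γH β a t)]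
end
end

section
/- For all β, a, t ∈ ℝ one has x(γ_{β,a}(t)) = μ_h(a)/cosh(t − log μ_h(a)), i.e. x(γ_{β,a}(t)) = (1+a²)^{−1/2}/cosh(t + log √(1+a²)). -/
noncomputable section

/-- The distinguished boundary defining function `x(z) = (1−|z|²)/(1+|z|²)`. -/
def xb (z : ℂ) : ℝ := (1 - ‖z‖ ^ 2) / (1 + ‖z‖ ^ 2)

/-- `μ_h(a) = (1+a²)^{−1/2}`. -/
def μh (a : ℝ) : ℝ := (1 + a ^ 2) ^ (-(1 : ℝ) / 2)

lemma tanh_half (t : ℝ) : Real.tanh (t / 2) = (Real.exp t - 1) / (Real.exp t + 1) := by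
  rw [Real.tanh_eq_sinh_div_cosh, Real.sinh_eq, Real.cosh_eq]
  have h1 : Real.exp (t / 2) * Real.exp (t / 2) = Real.exp t := by
    rw [← Real.exp_add]; ring_nf
  have h2 : Real.exp (t / 2) * Real.exp (-(t / 2)) = 1 := by
    rw [← Real.exp_add]; simp
  have hp : (0:ℝ) < Real.exp (t / 2) := Real.exp_pos _
  have hq : (0:ℝ) < Real.exp t + 1 := by positivity
  have hc : (0:ℝ) < Real.exp (t / 2) + Real.exp (-(t / 2)) := by positivity
  rw [div_eq_div_iff (by positivity) hq.ne']
  nlinarith [h1, h2]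

lemma xb_key (β a t : ℝ) :
    xb (γH β a t) = 2 / ((1 + a ^ 2) * Real.exp t + Real.exp (-t)) := by
  have hs : xhat t = (Real.exp t - 1) / (Real.exp t + 1) := tanh_half t
  set s : ℝ := xhat t with hsdef
  have habs : ‖γH β a t‖ ^ 2
      = (4 * s ^ 2 + (a * s + a) ^ 2) / (4 + (a * s + a) ^ 2) := by
    unfold γH
    rw [norm_mul, norm_div, Complex.norm_exp, mul_pow, div_pow, Complex.sq_norm, Complex.sq_norm,
      Complex.normSq_apply, Complex.normSq_apply]
    have hre : (Complex.I * (β : ℂ)).re = 0 := by simp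
    rw [hre, Real.exp_zero]
    simp [← hsdef, Complex.add_re, Complex.add_im, Complex.sub_re, Complex.sub_im,
      Complex.mul_re, Complex.mul_im]
    ring_nf
  have hden : (0:ℝ) < 4 + (a * s + a) ^ 2 := by positivity
  have hE : (0:ℝ) < Real.exp t := Real.exp_pos t
  have hE1 : (0:ℝ) < Real.exp t + 1 := by positivity
  have hnegE : Real.exp (-t) = (Real.exp t)⁻¹ := Real.exp_neg t
  have hbig : (0:ℝ) < (1 + a ^ 2) * Real.exp t + Real.exp (-t) := by positivity
  unfold xb
  rw [habs]
  rw [div_eq_div_iff (by positivity) hbig.ne']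
  rw [hnegE]
  have h1 : (1 - (4 * s ^ 2 + (a * s + a) ^ 2) / (4 + (a * s + a) ^ 2))
      = (4 - 4 * s ^ 2) / (4 + (a * s + a) ^ 2) := by
    field_simp
    ring
  rw [h1, hs]
  field_simp
  ring

lemma rhs_key (a t : ℝ) :
    (1 + a ^ 2) ^ (-(1 : ℝ) / 2) / Real.cosh (t + Real.log (Real.sqrt (1 + a ^ 2)))
      = 2 / ((1 + a ^ 2) * Real.exp t + Real.exp (-t)) := by
  have ha : (0:ℝ) < 1 + a ^ 2 := by positivity
  have hr : (0:ℝ) < Real.sqrt (1 + a ^ 2) := Real.sqrt_pos.mpr ha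
  have hrsq : Real.sqrt (1 + a ^ 2) ^ 2 = 1 + a ^ 2 := Real.sq_sqrt ha.le
  have hmu : (1 + a ^ 2) ^ (-(1 : ℝ) / 2) = (Real.sqrt (1 + a ^ 2))⁻¹ := by
    rw [Real.sqrt_eq_rpow, ← Real.rpow_neg ha.le]
    norm_num
  rw [hmu, Real.cosh_eq, Real.exp_add, Real.exp_log hr, neg_add, Real.exp_add,
    Real.exp_neg (Real.log _), Real.exp_log hr]
  have hE : (0:ℝ) < Real.exp t := Real.exp_pos t
  have hEn : (0:ℝ) < Real.exp (-t) := Real.exp_pos _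
  rw [Real.exp_neg t]
  field_simp
  linear_combination (-(Real.exp t ^ 2)) * hrsq

lemma mu_log (a : ℝ) :
    Real.log (μh a) = - Real.log (Real.sqrt (1 + a ^ 2)) := by
  have ha : (0:ℝ) < 1 + a ^ 2 := by positivity
  have hr : (0:ℝ) < Real.sqrt (1 + a ^ 2) := Real.sqrt_pos.mpr ha
  have hmu : μh a = (Real.sqrt (1 + a ^ 2))⁻¹ := by
    unfold μh
    rw [Real.sqrt_eq_rpow, ← Real.rpow_neg ha.le]
    norm_num
  rw [hmu, Real.log_inv]

/-- `x(γ_{β,a}(t)) = μ_h(a)/cosh(t − log μ_h(a))`, i.e.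
`x(γ_{β,a}(t)) = (1+a²)^{−1/2}/cosh(t + log √(1+a²))`. -/
theorem xb_along_horocyclic (β a t : ℝ) :
    xb (γH β a t) = μh a / Real.cosh (t - Real.log (μh a)) ∧
    xb (γH β a t) =
      (1 + a ^ 2) ^ (-(1 : ℝ) / 2) / Real.cosh (t + Real.log (Real.sqrt (1 + a ^ 2))) := by
  have h2 : xb (γH β a t) =
      (1 + a ^ 2) ^ (-(1 : ℝ) / 2) / Real.cosh (t + Real.log (Real.sqrt (1 + a ^ 2))) := by
    rw [xb_key, rhs_key]
  refine ⟨?_, h2⟩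
  rw [h2, mu_log]
  unfold μh
  ring_nf
end
end

section
/- For all β, a, t ∈ ℝ one has the bound x(γ_{β,a}(t)) ≤ μ_h(a). -/
noncomputable section

/-- The bound `x(γ_{β,a}(t)) ≤ μ_h(a)` for all `β, a, t ∈ ℝ`. -/
theorem xb_along_horocyclic_le (β a t : ℝ) :
    xb (γH β a t) ≤ μh a := by
  set x : ℝ := xhat t with hxdef
  set n : ℝ := 4 * x ^ 2 + a ^ 2 * (x + 1) ^ 2 with hn
  set d : ℝ := 4 + a ^ 2 * (x + 1) ^ 2 with hd
  have hdpos : 0 < d := by positivity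
  have hnnn : 0 ≤ n := by positivity
  -- compute the squared modulus
  have habs : (‖γH β a t‖) ^ 2 = n / d := by
    unfold γH
    rw [norm_mul, norm_div]
    have h1 : ‖Complex.exp (Complex.I * (β : ℂ))‖ = 1 := by
      rw [Complex.norm_exp]; simp
    have hN : ((2 + Complex.I * (a : ℂ)) * (x : ℂ) + Complex.I * (a : ℂ))
        = ((2 * x : ℝ) : ℂ) + ((a * x + a : ℝ) : ℂ) * Complex.I := by
      push_cast; ring
    have hD : (Complex.I * (a : ℂ) * (x : ℂ) - 2 + Complex.I * (a : ℂ))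
        = ((-2 : ℝ) : ℂ) + ((a * x + a : ℝ) : ℂ) * Complex.I := by
      push_cast; ring
    rw [h1, one_mul, div_pow, Complex.sq_norm, Complex.sq_norm, hN, hD,
      Complex.normSq_add_mul_I, Complex.normSq_add_mul_I, hn, hd]
    ring_nf
  have hμ : μh a = (Real.sqrt (1 + a ^ 2))⁻¹ := by
    rw [μh, show (-(1 : ℝ) / 2) = -(1 / 2) by ring,
      Real.rpow_neg (by positivity), ← Real.sqrt_eq_rpow]
  set s : ℝ := Real.sqrt (1 + a ^ 2) with hs
  have hs2 : s ^ 2 = 1 + a ^ 2 := Real.sq_sqrt (by positivity)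
  have hspos : 0 < s := Real.sqrt_pos.mpr (by positivity)
  rw [xb, habs, hμ]
  have key : (1 - n / d) / (1 + n / d) = (d - n) / (d + n) := by
    rw [div_eq_div_iff (by positivity) (by positivity)]
    field_simp
  rw [key, inv_eq_one_div, div_le_div_iff₀ (by positivity) hspos]
  have hsq : 0 ≤ ((s + 1) * x + (s - 1)) ^ 2 := sq_nonneg _
  nlinarith [sq_nonneg ((s + 1) * x + (s - 1)), hs2, hspos, sq_nonneg x, sq_nonneg (x + 1)]
end
end

section
/- For any a, β ∈ ℝ, setting t₀ := −log √(1+a²) and s := −a/(√(1+a²)+1) (so that s ∈ (−1,1)), one has γ_{β,a}(t + t₀) = γ^v_{β+π/2−2·arctan s, s}(t) for all t ∈ ℝ. -/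
noncomputable section

/-- Vertex parameterization of hyperbolic geodesics in the Poincaré disk. -/
def γv (ω s t : ℝ) : ℂ :=
  Complex.exp (Complex.I * (ω : ℂ)) *
    (((s : ℂ) + Complex.I * (xhat t : ℂ)) / (1 + Complex.I * (s : ℂ) * (xhat t : ℂ)))

lemma cos_two_arctan (s : ℝ) : Real.cos (2 * Real.arctan s) = (1 - s^2)/(1 + s^2) := by
  have h : (0:ℝ) < 1 + s^2 := by positivity
  rw [Real.cos_two_mul, Real.cos_arctan, div_pow, one_pow, Real.sq_sqrt h.le]
  field_simp
  ring

lemma sin_two_arctan (s : ℝ) : Real.sin (2 * Real.arctan s) = 2*s/(1 + s^2) := by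
  have h : (0:ℝ) < 1 + s^2 := by positivity
  have h2 : Real.sqrt (1+s^2) ≠ 0 := by positivity
  rw [Real.sin_two_mul, Real.sin_arctan, Real.cos_arctan]
  field_simp
  rw [Real.sq_sqrt h.le]

lemma aux_den1 (a X : ℝ) : Complex.I*(a:ℂ)*((X:ℝ):ℂ) - 2 + Complex.I*(a:ℂ) ≠ 0 := by
  intro h
  have := congrArg Complex.re h
  simp at this

lemma aux_den2 (s u : ℝ) : (1:ℂ) + Complex.I*(s:ℂ)*((u:ℝ):ℂ) ≠ 0 := by
  intro h
  have := congrArg Complex.re h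
  simp at this

set_option maxHeartbeats 2000000 in
/-- Horocyclic-to-vertex reparameterization: with `t₀ = −log √(1+a²)` and
`s = −a/(√(1+a²)+1)` (which lies in `(−1,1)`), one has
`γ_{β,a}(t + t₀) = γ^v_{β+π/2−2·arctan s, s}(t)` for all `t`. -/
theorem horocyclic_to_vertex (β a : ℝ) :
    -a / (Real.sqrt (1 + a ^ 2) + 1) ∈ Set.Ioo (-1 : ℝ) 1 ∧
    ∀ t : ℝ,
      γH β a (t + -Real.log (Real.sqrt (1 + a ^ 2))) =
        γv (β + Real.pi / 2 - 2 * Real.arctan (-a / (Real.sqrt (1 + a ^ 2) + 1)))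
          (-a / (Real.sqrt (1 + a ^ 2) + 1)) t := by
  set r := Real.sqrt (1 + a ^ 2) with hrdef
  have hr2 : r^2 = 1 + a^2 := Real.sq_sqrt (by positivity)
  have hr1 : 1 ≤ r := by
    have h := Real.sqrt_le_sqrt (show (1:ℝ) ≤ 1 + a^2 by nlinarith)
    rwa [Real.sqrt_one] at h
  have hrpos : (0:ℝ) < r := lt_of_lt_of_le one_pos hr1
  have habs : |a| < r + 1 := by
    have h1 : |a| ≤ r := by
      rw [hrdef, ← Real.sqrt_sq_eq_abs]
      exact Real.sqrt_le_sqrt (by nlinarith)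
    linarith
  set s := -a / (r + 1) with hsdef
  have hs' : |s| < 1 := by
    rw [hsdef, abs_div, abs_neg, abs_of_pos (by positivity : (0:ℝ) < r + 1),
      div_lt_one (by positivity)]
    exact habs
  have hs := abs_lt.mp hs'
  have h1spos : (0:ℝ) < 1 - s^2 := by nlinarith [hs.1, hs.2]
  have h2spos : (0:ℝ) < 1 + s^2 := by positivity
  have h1s : 1 - s^2 = 2/(r+1) := by
    rw [hsdef]; field_simp; linear_combination hr2
  have h2s : 1 + s^2 = 2*r/(r+1) := by
    rw [hsdef]; field_simp; linear_combination (-1)*hr2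
  have ha2 : a = -2*s/(1 - s^2) := by
    rw [h1s, hsdef]; field_simp
  have hr3 : r * (1 - s^2) = 1 + s^2 := by
    rw [h1s, h2s]; field_simp
  refine ⟨⟨hs.1, hs.2⟩, fun t => ?_⟩
  set E := Real.exp t with hEdef
  have hEpos : (0:ℝ) < E := Real.exp_pos t
  have hE0 : Real.exp (t + -Real.log r) = E / r := by
    rw [Real.exp_add, Real.exp_neg, Real.exp_log hrpos, div_eq_mul_inv]
  have hd2 : (0:ℝ) < E*(1 - s^2) + (1 + s^2) := by
    have := mul_pos hEpos h1spos; linarith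
  have hx1 : xhat (t + -Real.log r) = (E*(1 - s^2) - (1 + s^2))/(E*(1 - s^2) + (1 + s^2)) := by
    rw [xhat_eq, hE0]
    have key1 : (E/r - 1)/(E/r + 1) = (E - r)/(E + r) := by
      rw [div_eq_div_iff (by positivity : (0:ℝ) < E/r + 1).ne' (by positivity : (0:ℝ) < E + r).ne']
      field_simp
    rw [key1, div_eq_div_iff (by positivity : (0:ℝ) < E + r).ne' hd2.ne']
    linear_combination (-2*E) * hr3
  have hx2 : xhat t = (E - 1)/(E + 1) := xhat_eq t
  have hexp : Complex.exp (Complex.I * ((β + Real.pi / 2 - 2 * Real.arctan s : ℝ) : ℂ)) =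
      Complex.exp (Complex.I * (β : ℂ)) *
        (Complex.I * ((((1 - s^2)/(1 + s^2) : ℝ) : ℂ) - Complex.I * (((2*s/(1 + s^2) : ℝ)) : ℂ))) := by
    rw [show Complex.I * ((β + Real.pi / 2 - 2 * Real.arctan s : ℝ) : ℂ) =
      Complex.I * (β:ℂ) + (((Real.pi/2 : ℝ)):ℂ) * Complex.I +
        ((-(2*Real.arctan s) : ℝ) : ℂ) * Complex.I by push_cast; ring]
    rw [Complex.exp_add, Complex.exp_add, Complex.exp_mul_I, Complex.exp_mul_I]
    rw [← Complex.ofReal_cos, ← Complex.ofReal_sin, ← Complex.ofReal_cos, ← Complex.ofReal_sin]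
    rw [Real.cos_pi_div_two, Real.sin_pi_div_two, Real.cos_neg, Real.sin_neg,
      cos_two_arctan, sin_two_arctan]
    push_cast
    ring
  have haC : (a:ℂ) = -2*(s:ℂ)/(1-(s:ℂ)^2) :=
    mod_cast congrArg (Complex.ofReal) ha2
  have h1C : (1:ℂ) - (s:ℂ)^2 ≠ 0 := by exact_mod_cast h1spos.ne'
  have h2C : (1:ℂ) + (s:ℂ)^2 ≠ 0 := by exact_mod_cast h2spos.ne'
  have h3C : (E:ℂ) + 1 ≠ 0 := by exact_mod_cast (by positivity : (0:ℝ) < E + 1).ne'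
  have h4C : (E:ℂ)*(1-(s:ℂ)^2) + (1+(s:ℂ)^2) ≠ 0 := by exact_mod_cast hd2.ne'
  have hI3 : Complex.I^3 = -Complex.I := by rw [pow_succ, Complex.I_sq]; ring
  have hI4 : Complex.I^4 = 1 := by rw [pow_succ, hI3]; simp [Complex.I_mul_I]
  rw [γH, γv, hexp, hx1, hx2]
  rw [mul_assoc (Complex.exp (Complex.I * (β:ℂ))), mul_right_inj' (Complex.exp_ne_zero _)]
  rw [← mul_div_assoc]
  rw [div_eq_div_iff (aux_den1 a _) (aux_den2 s _)]
  push_cast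
  rw [haC]
  have h4C' : ((1:ℂ)-(s:ℂ)^2)*(E:ℂ) + (1+(s:ℂ)^2) ≠ 0 := by rw [mul_comm]; exact h4C
  field_simp
  ring_nf
  simp only [Complex.I_sq, hI3, hI4]
  ring
end
end

section
/- For any β, a ∈ ℝ, the function t ↦ |γ_{β,a}(t)| attains its minimum exactly at t₀ := −log √(1+a²): for all t ∈ ℝ one has |γ_{β,a}(t₀)| ≤ |γ_{β,a}(t)|, with equality if and only if t = t₀. -/
noncomputable section

lemma xhat_inj : Function.Injective xhat := by
  intro u v h
  rw [xhat_eq, xhat_eq] at h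
  have hu := Real.exp_pos u
  have hv := Real.exp_pos v
  rw [div_eq_div_iff (by positivity) (by positivity)] at h
  have : Real.exp u = Real.exp v := by nlinarith
  exact Real.exp_injective this

lemma absSq (β a t : ℝ) :
    (‖γH β a t‖)^2
      = (4*(xhat t)^2 + a^2*(1+xhat t)^2) / (4 + a^2*(1+xhat t)^2) := by
  set x := xhat t
  have habs1 : ‖Complex.exp (Complex.I * (β:ℂ))‖ = 1 := by
    rw [Complex.norm_exp]; simp
  rw [γH, norm_mul, habs1, one_mul, norm_div]
  rw [div_pow, Complex.sq_norm, Complex.sq_norm]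
  congr 1
  · simp [Complex.normSq_apply, Complex.add_re, Complex.add_im, Complex.mul_re,
      Complex.mul_im]
    ring
  · simp [Complex.normSq_apply, Complex.add_re, Complex.add_im, Complex.mul_re,
      Complex.mul_im, Complex.sub_re, Complex.sub_im]
    ring

/-- The function `t ↦ |γ_{β,a}(t)|` attains its minimum exactly at
`t₀ = −log √(1+a²)`: for all `t`, `|γ_{β,a}(t₀)| ≤ |γ_{β,a}(t)|`, with equality
if and only if `t = t₀`. -/
theorem horocyclic_modulus_min (β a t : ℝ) :
    ‖γH β a (-Real.log (Real.sqrt (1 + a ^ 2)))‖ ≤ ‖γH β a t‖ ∧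
    (‖γH β a (-Real.log (Real.sqrt (1 + a ^ 2)))‖ = ‖γH β a t‖ ↔
      t = -Real.log (Real.sqrt (1 + a ^ 2))) := by
  set s := Real.sqrt (1 + a ^ 2) with hs_def
  have hs2 : s ^ 2 = 1 + a ^ 2 := Real.sq_sqrt (by positivity)
  have hs0 : 0 < s := Real.sqrt_pos.mpr (by positivity)
  have hs1 : 1 ≤ s := by nlinarith [sq_nonneg a]
  set t₀ := -Real.log s with ht0
  have h1s : (0:ℝ) < 1 + s := by linarith
  have hx0 : xhat t₀ = (1 - s) / (1 + s) := by
    rw [xhat_eq, ht0, Real.exp_neg, Real.exp_log hs0]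
    rw [div_eq_div_iff (by positivity) h1s.ne']
    field_simp
  set x := xhat t with hx
  set x₀ := xhat t₀ with hx₀def
  have hB : (0:ℝ) < 4 + a^2*(1+x)^2 := by positivity
  have hB0 : (0:ℝ) < 4 + a^2*(1+x₀)^2 := by positivity
  have ha2 : a^2 = s^2 - 1 := by linarith
  have key : (4*x^2 + a^2*(1+x)^2) * (4 + a^2*(1+x₀)^2)
      - (4*x₀^2 + a^2*(1+x₀)^2) * (4 + a^2*(1+x)^2)
      = 16*s/(1+s)^2 * ((s+1)*(1+x)-2)^2 := by
    rw [hx0, ha2]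
    field_simp
    ring
  have h1 := absSq β a t
  have h2 := absSq β a t₀
  have habs0 : 0 ≤ ‖γH β a t₀‖ := norm_nonneg _
  have habs : 0 ≤ ‖γH β a t‖ := norm_nonneg _
  have hnn : (0:ℝ) ≤ 16*s/(1+s)^2 * ((s+1)*(1+x)-2)^2 := by positivity
  have hsqle : (‖γH β a t₀‖)^2 ≤ (‖γH β a t‖)^2 := by
    rw [h1, h2, div_le_div_iff₀ hB0 hB]
    linarith
  have hle : ‖γH β a t₀‖ ≤ ‖γH β a t‖ := by
    nlinarith
  refine ⟨hle, ?_, fun h => by rw [h]⟩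
  intro heq
  have hAB : (4*x₀^2 + a^2*(1+x₀)^2) * (4 + a^2*(1+x)^2)
      = (4*x^2 + a^2*(1+x)^2) * (4 + a^2*(1+x₀)^2) := by
    have hsq : (‖γH β a t₀‖)^2 = (‖γH β a t‖)^2 := by rw [heq]
    rw [h1, h2] at hsq
    rw [div_eq_div_iff hB0.ne' hB.ne'] at hsq
    exact hsq
  have hzero : 16*s/(1+s)^2 * ((s+1)*(1+x)-2)^2 = 0 := by linarith
  have h16 : (0:ℝ) < 16*s/(1+s)^2 := by positivity
  have hfac : (s+1)*(1+x) - 2 = 0 := by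
    have := (mul_eq_zero.mp hzero).resolve_left h16.ne'
    exact pow_eq_zero_iff (two_ne_zero) |>.mp this
  have hxval : x = (1-s)/(1+s) := by
    field_simp
    linarith
  have hxx : xhat t = xhat t₀ := by rw [← hx, ← hx₀def, hxval, hx0]
  exact xhat_inj hxx
end
end

section
/- Orientation reversal in horocyclic coordinates: for all β, a, t ∈ ℝ one has γ_{β+π+2·arctan a, −a}(t) = γ_{β,a}(2·log μ_h(a) − t). Consequently, for every continuous function f : ℂ → ℝ with compact support contained in the open unit disk, ∫_ℝ f(γ_{β+π+2·arctan a, −a}(t)) dt = ∫_ℝ f(γ_{β,a}(t)) dt, i.e. the hyperbolic X-ray transform I₀^H f(β,a) := ∫_ℝ f(γ_{β,a}(t)) dt satisfies I₀^H f ∘ S_A^H = I₀^H f where S_A^H(β,a) := (β+π+2·arctan a, −a). -/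
noncomputable section

lemma abs_tanh_lt_one (x : ℝ) : |Real.tanh x| < 1 := by
  rw [Real.tanh_eq_sinh_div_cosh, abs_div, abs_of_pos (Real.cosh_pos x),
    div_lt_one (Real.cosh_pos x), abs_lt]
  constructor
  · have := Real.sinh_lt_cosh (-x)
    rw [Real.sinh_neg, Real.cosh_neg] at this
    linarith
  · exact Real.sinh_lt_cosh x

lemma tanh_sub' (x y : ℝ) : Real.tanh (x - y) =
    (Real.tanh x - Real.tanh y) / (1 - Real.tanh x * Real.tanh y) := by
  have hx := Real.cosh_pos x
  have hy := Real.cosh_pos y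
  have hxy := Real.cosh_pos (x - y)
  have hne : Real.cosh x * Real.cosh y - Real.sinh x * Real.sinh y ≠ 0 := by
    rw [← Real.cosh_sub]; exact hxy.ne'
  simp only [Real.tanh_eq_sinh_div_cosh]
  rw [Real.sinh_sub, Real.cosh_sub]
  field_simp
  try ring

lemma tanh_log_mu (a : ℝ) : Real.tanh (Real.log (μh a)) = -(a ^ 2) / (a ^ 2 + 2) := by
  have h1 : (0 : ℝ) < 1 + a ^ 2 := by positivity
  have hμ : (0 : ℝ) < μh a := Real.rpow_pos_of_pos h1 _
  have hsq : μh a ^ 2 = (1 + a ^ 2)⁻¹ := by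
    rw [μh, ← Real.rpow_natCast ((1 + a ^ 2) ^ (-(1:ℝ)/2)) 2, ← Real.rpow_mul h1.le]
    norm_num [Real.rpow_neg_one]
  have hone : μh a ^ 2 * (1 + a ^ 2) = 1 := by
    rw [hsq]; field_simp
  have hinv : (μh a)⁻¹ = μh a * (1 + a ^ 2) :=
    (eq_inv_of_mul_eq_one_left (by nlinarith [hone])).symm
  rw [Real.tanh_eq_sinh_div_cosh, Real.sinh_log hμ, Real.cosh_log hμ, hinv]
  rw [div_eq_div_iff (by positivity) (by positivity)]
  ring

/-- Möbius fraction substitution. -/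
lemma frac_subst (p q r s n d : ℂ) (hd : d ≠ 0) (h2 : r * n + s * d ≠ 0) :
    (p * (n / d) + q) / (r * (n / d) + s) = (p * n + q * d) / (r * n + s * d) := by
  have e1 : p * (n / d) + q = (p * n + q * d) / d := by field_simp
  have e2 : r * (n / d) + s = (r * n + s * d) / d := by field_simp
  rw [e1, e2, div_div_div_cancel_right₀]
  exact hd

/-- Orientation reversal in horocyclic coordinates:
`γ_{β+π+2·arctan a, −a}(t) = γ_{β,a}(2·log μ_h(a) − t)`, and consequently the hyperbolic
X-ray transform `I₀^H f(β,a) = ∫_ℝ f(γ_{β,a}(t)) dt` satisfies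
`I₀^H f ∘ S_A^H = I₀^H f`, where `S_A^H(β,a) = (β+π+2·arctan a, −a)`, for every continuous
compactly supported `f` with support inside the open unit disk. -/
theorem horocyclic_orientation_reversal (β a : ℝ) :
    (∀ t : ℝ,
      γH (β + Real.pi + 2 * Real.arctan a) (-a) t = γH β a (2 * Real.log (μh a) - t)) ∧
    ∀ f : ℂ → ℝ, Continuous f → HasCompactSupport f → tsupport f ⊆ Metric.ball 0 1 →
      (∫ t : ℝ, f (γH (β + Real.pi + 2 * Real.arctan a) (-a) t)) =
        ∫ t : ℝ, f (γH β a t) := by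
  have key : ∀ t : ℝ,
      γH (β + Real.pi + 2 * Real.arctan a) (-a) t = γH β a (2 * Real.log (μh a) - t) := by
    intro t
    have hub : |xhat t| < 1 := abs_tanh_lt_one _
    have hu1 : -1 < xhat t := (abs_lt.1 hub).1
    have hu2 : xhat t < 1 := (abs_lt.1 hub).2
    set u : ℝ := xhat t with hu
    have hDx : (0 : ℝ) < a ^ 2 + 2 + a ^ 2 * u := by nlinarith [sq_nonneg a]
    have h2R : (0 : ℝ) < a ^ 2 + 2 := by positivity
    have hden : (0 : ℝ) < 1 - -(a ^ 2) / (a ^ 2 + 2) * u := by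
      have h : 1 - -(a ^ 2) / (a ^ 2 + 2) * u = (a ^ 2 + 2 + a ^ 2 * u) / (a ^ 2 + 2) := by
        field_simp
        try ring
      rw [h]; positivity
    have hx' : xhat (2 * Real.log (μh a) - t) =
        (-(a ^ 2) - (a ^ 2 + 2) * u) / (a ^ 2 + 2 + a ^ 2 * u) := by
      have harg : (2 * Real.log (μh a) - t) / 2 = Real.log (μh a) - t / 2 := by ring
      rw [xhat, harg, tanh_sub', tanh_log_mu]
      rw [show Real.tanh (t / 2) = u from rfl]
      rw [div_eq_div_iff hden.ne' hDx.ne']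
      field_simp
      try ring
    -- exponential factor
    have h1a : (0 : ℝ) < 1 + a ^ 2 := by positivity
    have hsqrt : Real.sqrt (1 + a ^ 2) ^ 2 = 1 + a ^ 2 := Real.sq_sqrt h1a.le
    have hsne : Real.sqrt (1 + a ^ 2) ≠ 0 := by positivity
    have hcos : Real.cos (2 * Real.arctan a) = (1 - a ^ 2) / (1 + a ^ 2) := by
      rw [Real.cos_two_mul, Real.cos_arctan]
      rw [div_pow, one_pow, hsqrt]
      field_simp
      try ring
    have hsin : Real.sin (2 * Real.arctan a) = 2 * a / (1 + a ^ 2) := by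
      rw [Real.sin_two_mul, Real.sin_arctan, Real.cos_arctan]
      field_simp
      try nlinarith [hsqrt]
      rw [hsqrt]
    have h1a' : ((1 : ℂ) + (a : ℂ) ^ 2) ≠ 0 := by
      have h : ((1 + a ^ 2 : ℝ) : ℂ) ≠ 0 := Complex.ofReal_ne_zero.2 h1a.ne'
      push_cast at h
      exact h
    have hexp : Complex.exp (Complex.I * ((β + Real.pi + 2 * Real.arctan a : ℝ) : ℂ)) =
        Complex.exp (Complex.I * (β : ℂ)) *
          ((-(1 - (a : ℂ) ^ 2) - 2 * (a : ℂ) * Complex.I) / (1 + (a : ℂ) ^ 2)) := by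
      have harg : Complex.I * ((β + Real.pi + 2 * Real.arctan a : ℝ) : ℂ)
          = Complex.I * (β : ℂ) + ((Real.pi + 2 * Real.arctan a : ℝ) : ℂ) * Complex.I := by
        push_cast; ring
      rw [harg, Complex.exp_add, Complex.exp_mul_I]
      congr 1
      rw [← Complex.ofReal_cos, ← Complex.ofReal_sin]
      rw [Real.cos_add, Real.sin_add, Real.cos_pi, Real.sin_pi, hcos, hsin]
      field_simp
      push_cast
      field_simp
      ring
    -- abbreviations in ℂ
    set A : ℂ := (a : ℂ) with hA
    set U : ℂ := ((u : ℝ) : ℂ) with hU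
    have hNx : ((-(a ^ 2) - (a ^ 2 + 2) * u : ℝ) : ℂ) = -(A ^ 2) - (A ^ 2 + 2) * U := by
      rw [hA, hU]; push_cast; ring
    have hDxc : ((a ^ 2 + 2 + a ^ 2 * u : ℝ) : ℂ) = A ^ 2 + 2 + A ^ 2 * U := by
      rw [hA, hU]; push_cast; ring
    have hDxc0 : (A ^ 2 + 2 + A ^ 2 * U : ℂ) ≠ 0 := by
      rw [← hDxc]
      exact Complex.ofReal_ne_zero.2 hDx.ne'
    have hQ : Complex.I * A * (-(A ^ 2) - (A ^ 2 + 2) * U)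
        + (-2 + Complex.I * A) * (A ^ 2 + 2 + A ^ 2 * U) ≠ 0 := by
      intro h
      have hre := congrArg Complex.re h
      simp only [hA, hU, Complex.add_re, Complex.mul_re, Complex.mul_im, Complex.I_re,
        Complex.I_im, Complex.ofReal_re, Complex.ofReal_im, Complex.neg_re, Complex.neg_im,
        Complex.sub_re, Complex.sub_im, Complex.add_im, Complex.zero_re, Complex.re_ofNat,
        Complex.im_ofNat, Complex.one_re, Complex.one_im, pow_two] at hre
      norm_num at hre
      nlinarith [hDx, sq_nonneg a]
    -- rewrite RHS as a single fraction
    have hRHS : γH β a (2 * Real.log (μh a) - t) =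
        Complex.exp (Complex.I * (β : ℂ)) *
          (((2 + Complex.I * A) * (-(A ^ 2) - (A ^ 2 + 2) * U)
              + Complex.I * A * (A ^ 2 + 2 + A ^ 2 * U))
            / (Complex.I * A * (-(A ^ 2) - (A ^ 2 + 2) * U)
                + (-2 + Complex.I * A) * (A ^ 2 + 2 + A ^ 2 * U))) := by
      rw [γH, hx']
      congr 1
      have hcast : (((-(a ^ 2) - (a ^ 2 + 2) * u) / (a ^ 2 + 2 + a ^ 2 * u) : ℝ) : ℂ)
          = (-(A ^ 2) - (A ^ 2 + 2) * U) / (A ^ 2 + 2 + A ^ 2 * U) := by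
        rw [Complex.ofReal_div, hNx, hDxc]
      rw [hcast, ← hA]
      rw [show Complex.I * A * ((-(A ^ 2) - (A ^ 2 + 2) * U) / (A ^ 2 + 2 + A ^ 2 * U)) - 2
            + Complex.I * A
          = Complex.I * A * ((-(A ^ 2) - (A ^ 2 + 2) * U) / (A ^ 2 + 2 + A ^ 2 * U))
            + (-2 + Complex.I * A) from by ring]
      exact frac_subst _ _ _ _ _ _ hDxc0 hQ
    -- nonzero denominator on the LHS
    have hD1 : Complex.I * ((-a : ℝ) : ℂ) * ((xhat t : ℝ) : ℂ) - 2
        + Complex.I * ((-a : ℝ) : ℂ) ≠ 0 := by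
      intro h
      have hre := congrArg Complex.re h
      simp only [Complex.add_re, Complex.sub_re, Complex.mul_re, Complex.mul_im, Complex.I_re,
        Complex.I_im, Complex.ofReal_re, Complex.ofReal_im, Complex.zero_re,
        Complex.re_ofNat] at hre
      norm_num at hre
    rw [γH, hexp, hRHS]
    rw [mul_assoc]
    congr 1
    rw [div_mul_div_comm, div_eq_div_iff (mul_ne_zero h1a' hD1) hQ]
    rw [hU, hu, hA]
    push_cast
    rw [Complex.ext_iff]
    constructor <;>
      · simp only [Complex.add_re, Complex.add_im, Complex.sub_re, Complex.sub_im,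
          Complex.mul_re, Complex.mul_im, Complex.neg_re, Complex.neg_im, Complex.I_re,
          Complex.I_im, Complex.ofReal_re, Complex.ofReal_im, Complex.one_re, Complex.one_im,
          Complex.re_ofNat, Complex.im_ofNat, pow_two]
        norm_num
        ring
  refine ⟨key, ?_⟩
  intro f _ _ _
  have h2 : (∫ t : ℝ, f (γH β a (2 * Real.log (μh a) - t))) = ∫ t : ℝ, f (γH β a t) := by
    rw [← MeasureTheory.integral_neg_eq_self
      (fun t : ℝ => f (γH β a (2 * Real.log (μh a) - t))) MeasureTheory.volume]
    simp only [sub_neg_eq_add]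
    exact MeasureTheory.integral_add_left_eq_self
      (fun s : ℝ => f (γH β a s)) (2 * Real.log (μh a))
  rw [← h2]
  congr 1
  funext t
  rw [key t]
end
end

section
/- Footprint map formula: let z ∈ ℂ with |z| < 1 and θ ∈ ℝ, and set ζ := z·e^{−iθ}, β := θ + π + 2·arg(1 − ζ) (principal argument, well defined since Re(1−ζ) > 0), and a := 2·Im(ζ)/(1 − |z|²). Then the Möbius map T_{z,θ}(w) := (e^{iθ}·w + z)/(1 + e^{iθ}·conj(z)·w) satisfies T_{z,θ}(−1) = e^{iβ} and T_{z,θ}(1) = e^{i(β+π+2·arctan a)}; that is, the unit-speed hyperbolic geodesic t ↦ T_{z,θ}(x̂(t)) through (z,θ) has the same ideal endpoints as the horocyclically parameterized geodesic γ_{β,a}. -/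
noncomputable section

/-- The Möbius map `T_{z,θ}(w) = (e^{iθ}·w + z)/(1 + e^{iθ}·conj(z)·w)`. -/
def Tmob (z : ℂ) (θ : ℝ) (w : ℂ) : ℂ :=
  (Complex.exp (Complex.I * (θ : ℂ)) * w + z) /
    (1 + Complex.exp (Complex.I * (θ : ℂ)) * (starRingEnd ℂ) z * w)

/-- Footprint map formula: for `|z| < 1`, `θ ∈ ℝ`, with `ζ = z·e^{−iθ}`,
`β = θ + π + 2·arg(1 − ζ)`, and `a = 2·Im(ζ)/(1 − |z|²)`, the Möbius map `T_{z,θ}`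
satisfies `T_{z,θ}(−1) = e^{iβ}` and `T_{z,θ}(1) = e^{i(β+π+2·arctan a)}`; that is,
the geodesic `t ↦ T_{z,θ}(x̂(t))` through `(z,θ)` has the same ideal endpoints as the
horocyclically parameterized geodesic `γ_{β,a}`. -/
theorem footprint_map_formula (z : ℂ) (hz : ‖z‖ < 1) (θ : ℝ)
    (ζ : ℂ) (hζ : ζ = z * Complex.exp (-Complex.I * (θ : ℂ)))
    (β : ℝ) (hβ : β = θ + Real.pi + 2 * Complex.arg (1 - ζ))
    (a : ℝ) (ha : a = 2 * ζ.im / (1 - ‖z‖ ^ 2)) :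
    Tmob z θ (-1) = Complex.exp (Complex.I * (β : ℂ)) ∧
    Tmob z θ 1 = Complex.exp (Complex.I * ((β + Real.pi + 2 * Real.arctan a : ℝ) : ℂ)) := by
  set E : ℂ := Complex.exp (Complex.I * (θ : ℂ)) with hE
  have hEconj : (starRingEnd ℂ) E = Complex.exp (-Complex.I * (θ : ℂ)) := by
    rw [hE, ← Complex.exp_conj]
    congr 1
    simp [Complex.conj_ofReal]
  have hEmul : E * Complex.exp (-Complex.I * (θ : ℂ)) = 1 := by
    rw [hE, ← Complex.exp_add]
    ring_nf
    exact Complex.exp_zero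
  have hzζ : z = ζ * E := by
    rw [hζ]; rw [mul_assoc]
    rw [show Complex.exp (-Complex.I * (θ : ℂ)) * E = 1 by rw [mul_comm]; exact hEmul]
    ring
  have hconjzE : E * (starRingEnd ℂ) z = (starRingEnd ℂ) ζ := by
    rw [hzζ, map_mul, hEconj]
    rw [show E * ((starRingEnd ℂ) ζ * Complex.exp (-Complex.I * (θ : ℂ))) =
      (starRingEnd ℂ) ζ * (E * Complex.exp (-Complex.I * (θ : ℂ))) by ring, hEmul, mul_one]
  have hζabs : ‖ζ‖ = ‖z‖ := by
    rw [hζ, norm_mul, Complex.norm_exp]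
    simp
  have hζlt : ‖ζ‖ < 1 := hζabs ▸ hz
  have hw1 : (1 : ℂ) - ζ ≠ 0 := by
    intro h
    have h1 : ζ = 1 := by linear_combination -h
    rw [h1] at hζlt; simp at hζlt
  have hw2 : (1 : ℂ) + ζ ≠ 0 := by
    intro h
    have h1 : ζ = -1 := by linear_combination h
    rw [h1] at hζlt; simp at hζlt
  have hw1c : (starRingEnd ℂ) (1 - ζ) ≠ 0 := by
    intro h
    apply hw1
    have := congrArg (starRingEnd ℂ) h
    simpa using this
  have hw2c : (starRingEnd ℂ) (1 + ζ) ≠ 0 := by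
    intro h
    apply hw2
    have := congrArg (starRingEnd ℂ) h
    simpa using this
  -- |1-ζ|² = (1-ζ) * conj(1-ζ)
  have habs1 : ((‖1 - ζ‖ : ℂ))^2 = (1 - ζ) * (starRingEnd ℂ) (1 - ζ) := by
    rw [Complex.mul_conj]
    norm_cast
    exact Complex.sq_norm _
  have habsne : (‖1 - ζ‖ : ℂ) ≠ 0 := by
    simpa [sub_eq_zero] using hw1
  -- exp(I*β)
  have hexparg : Complex.exp ((Complex.arg (1 - ζ) : ℂ) * Complex.I)
      = (1 - ζ) / (‖1 - ζ‖ : ℂ) := by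
    field_simp
    rw [mul_comm]
    exact Complex.norm_mul_exp_arg_mul_I _
  have hexpβ : Complex.exp (Complex.I * (β : ℂ))
      = E * (-1) * ((1 - ζ) / (‖1 - ζ‖ : ℂ))^2 := by
    rw [hβ]
    push_cast
    rw [show Complex.I * ((θ : ℂ) + (Real.pi : ℂ) + 2 * (Complex.arg (1 - ζ) : ℂ))
      = Complex.I * (θ : ℂ) + (Real.pi : ℂ) * Complex.I
        + ((Complex.arg (1 - ζ) : ℂ) * Complex.I + (Complex.arg (1 - ζ) : ℂ) * Complex.I) by ring]
    rw [Complex.exp_add, Complex.exp_add, Complex.exp_add, Complex.exp_pi_mul_I, hexparg, ← hE]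
    ring
  have h1 : Tmob z θ (-1) = Complex.exp (Complex.I * (β : ℂ)) := by
    rw [hexpβ, Tmob]
    rw [show E * (-1) + z = -(E * (1 - ζ)) by rw [hzζ]; ring]
    rw [show 1 + E * (starRingEnd ℂ) z * (-1) = (starRingEnd ℂ) (1 - ζ) by
      rw [map_sub, map_one, ← hconjzE]; ring]
    rw [div_pow, habs1]
    have hgoal1 : -(E * (1 - ζ)) / (starRingEnd ℂ) (1 - ζ)
        = (E * -1 * (1 - ζ)^2) / ((1 - ζ) * (starRingEnd ℂ) (1 - ζ)) := by
      rw [div_eq_div_iff hw1c (mul_ne_zero hw1 hw1c)]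
      ring
    rw [hgoal1]
    ring
  refine ⟨h1, ?_⟩
  -- second part
  have hsq : (Real.sqrt (1 + a^2) : ℂ) ^ 2 = 1 + (a : ℂ)^2 := by
    norm_cast
    rw [Real.sq_sqrt]
    positivity
  have hsqne : (Real.sqrt (1 + a^2) : ℂ) ≠ 0 := by
    norm_cast
    positivity
  have hexpatan : Complex.exp ((Real.arctan a : ℂ) * Complex.I)
      = (1 + (a : ℂ) * Complex.I) / (Real.sqrt (1 + a^2) : ℂ) := by
    rw [Complex.exp_mul_I]
    rw [← Complex.ofReal_cos, ← Complex.ofReal_sin, Real.cos_arctan, Real.sin_arctan]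
    push_cast
    field_simp
  have haD : (a : ℂ) * (1 - (‖z‖ : ℂ)^2) = 2 * (ζ.im : ℂ) := by
    have hD : (1 : ℝ) - ‖z‖ ^ 2 ≠ 0 := by nlinarith [norm_nonneg z]
    have hDc : ((1 : ℝ) - ‖z‖ ^ 2 : ℂ) ≠ 0 := by exact_mod_cast hD
    rw [ha]
    push_cast
    push_cast at hDc
    rw [div_mul_cancel₀ _ hDc]
  -- key: (1+ζ)*conj(1-ζ) = (1-|z|²)(1 + a I)
  have hkey : (1 + ζ) * (starRingEnd ℂ) (1 - ζ)
      = (1 - (‖z‖ : ℂ)^2) * (1 + (a : ℂ) * Complex.I) := by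
    have hns : ζ * (starRingEnd ℂ) ζ = ((‖z‖ : ℂ))^2 := by
      rw [Complex.mul_conj, ← hζabs]
      norm_cast
      exact (Complex.sq_norm _).symm
    have hsub : ζ - (starRingEnd ℂ) ζ = 2 * (ζ.im : ℂ) * Complex.I := by
      rw [Complex.sub_conj]; push_cast; ring
    rw [map_sub]
    simp only [map_one]
    linear_combination hsub - hns - Complex.I * haD
  have hkey2 : (starRingEnd ℂ) (1 + ζ) * (1 - ζ)
      = (1 - (‖z‖ : ℂ)^2) * (1 - (a : ℂ) * Complex.I) := by
    have := congrArg (starRingEnd ℂ) hkey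
    simpa [map_mul, map_sub, map_add, Complex.conj_conj, Complex.conj_ofReal, ← sub_eq_add_neg] using this
  -- exp(I(β+π+2 arctan a))
  have hexp2 : Complex.exp (Complex.I * ((β + Real.pi + 2 * Real.arctan a : ℝ) : ℂ))
      = Complex.exp (Complex.I * (β : ℂ)) * (-1) * ((1 + (a : ℂ) * Complex.I) / (Real.sqrt (1 + a^2) : ℂ))^2 := by
    rw [show ((β + Real.pi + 2 * Real.arctan a : ℝ) : ℂ)
      = (β : ℂ) + (Real.pi : ℂ) + 2 * (Real.arctan a : ℂ) by norm_cast]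
    rw [show Complex.I * ((β : ℂ) + (Real.pi : ℂ) + 2 * (Real.arctan a : ℂ))
      = Complex.I * (β : ℂ) + (Real.pi : ℂ) * Complex.I
        + ((Real.arctan a : ℂ) * Complex.I + (Real.arctan a : ℂ) * Complex.I) by ring]
    rw [Complex.exp_add, Complex.exp_add, Complex.exp_add, Complex.exp_pi_mul_I, hexpatan]
    ring
  rw [hexp2, hexpβ, Tmob]
  rw [show E * 1 + z = E * (1 + ζ) by rw [hzζ]; ring]
  rw [show 1 + E * (starRingEnd ℂ) z * 1 = (starRingEnd ℂ) (1 + ζ) by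
    rw [map_add, map_one, ← hconjzE]; ring]
  rw [div_pow, div_pow, habs1, hsq]
  have hDa : (1 + (a:ℂ)^2) ≠ 0 := by
    have : (1 : ℝ) + a^2 ≠ 0 := by positivity
    exact_mod_cast this
  have hmain : E * (1 + ζ) * ((1 - ζ) * (starRingEnd ℂ) (1 - ζ)) * (1 + (a:ℂ)^2)
      = E * (1 - ζ)^2 * (1 + (a:ℂ) * Complex.I)^2 * (starRingEnd ℂ) (1 + ζ) := by
    linear_combination (E * (1 - ζ) * (1 + (a:ℂ)^2)) * hkey
      - (E * (1 - ζ) * (1 + (a:ℂ) * Complex.I)^2) * hkey2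
      + (E * (1 - ζ) * (1 - ((‖z‖ : ℂ))^2) * (1 + (a:ℂ) * Complex.I) * (a:ℂ)^2)
        * Complex.I_sq
  have hgoal2 : E * (1 + ζ) / (starRingEnd ℂ) (1 + ζ)
      = (E * (1 - ζ)^2 * (1 + (a:ℂ) * Complex.I)^2)
        / (((1 - ζ) * (starRingEnd ℂ) (1 - ζ)) * (1 + (a:ℂ)^2)) := by
    rw [div_eq_div_iff hw2c (mul_ne_zero (mul_ne_zero hw1 hw1c) hDa)]
    linear_combination hmain
  rw [hgoal2]
  field_simp
end
end

section
/- Explicit projective equivalence: for all ω ∈ ℝ, s ∈ (−1,1), t ∈ ℝ one has Φ(γ^v_{ω,s}(t)) = e^{i(ω+π/2)}·( ((1−s²)/(1+s²))·tanh t − i·(2s/(1+s²)) ). Equivalently, setting α := −2·arctan s (so cos α = (1−s²)/(1+s²) and sin α = −2s/(1+s²)) and β := ω − π/2 − α, one has Φ(γ^v_{ω,s}(t)) = γ^E_{β,α}(u(t)) with u(t) := cos α · tanh t. Moreover the reparameterization satisfies u′(t) = ((1+s²)/(1−s²)) · x(γ^v_{ω,s}(t))². -/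
noncomputable section

/-- The projective map `Φ(z) = 2z/(1+|z|²)`. -/
def Φm (z : ℂ) : ℂ := 2 * z / (((1 + ‖z‖ ^ 2 : ℝ)) : ℂ)

/-- Fan-beam parameterization of Euclidean chords of the unit disk:
`γ^E_{β,α}(u) = e^{i(β+α+π)}·(u + i·sin α)`. -/
def γE (β α u : ℝ) : ℂ :=
  Complex.exp (Complex.I * ((β + α + Real.pi : ℝ) : ℂ)) *
    ((u : ℂ) + Complex.I * ((Real.sin α : ℝ) : ℂ))

lemma tanh_double (t : ℝ) :
    Real.tanh t = 2 * Real.tanh (t/2) / (1 + Real.tanh (t/2)^2) := by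
  have hc : Real.cosh (t/2) ≠ 0 := (Real.cosh_pos _).ne'
  have ht : t = 2 * (t/2) := by ring
  rw [ht, Real.tanh_eq_sinh_div_cosh, Real.sinh_two_mul, Real.cosh_two_mul,
    Real.tanh_eq_sinh_div_cosh]
  field_simp

lemma hasDerivAt_tanh' (x : ℝ) : HasDerivAt Real.tanh (1 - Real.tanh x ^ 2) x := by
  have hc : Real.cosh x ≠ 0 := (Real.cosh_pos _).ne'
  have h := (Real.hasDerivAt_sinh x).div (Real.hasDerivAt_cosh x) hc
  have heq : (Real.cosh x * Real.cosh x - Real.sinh x * Real.sinh x) / Real.cosh x ^ 2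
      = 1 - Real.tanh x ^ 2 := by
    rw [Real.tanh_eq_sinh_div_cosh]
    field_simp
  rw [heq] at h
  exact h.congr_of_eventuallyEq
    (Filter.Eventually.of_forall fun y => (Real.tanh_eq_sinh_div_cosh y))

set_option maxHeartbeats 1600000 in
/-- Explicit projective equivalence: for `s ∈ (−1,1)`,
`Φ(γ^v_{ω,s}(t)) = e^{i(ω+π/2)}·(((1−s²)/(1+s²))·tanh t − i·(2s/(1+s²)))`;
equivalently, with `α = −2·arctan s` and `β = ω − π/2 − α`,
`cos α = (1−s²)/(1+s²)`, `sin α = −2s/(1+s²)`, and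
`Φ(γ^v_{ω,s}(t)) = γ^E_{β,α}(u(t))` with `u(t) = cos α · tanh t`; moreover
`u′(t) = ((1+s²)/(1−s²))·x(γ^v_{ω,s}(t))²`. -/
theorem projective_equivalence (ω s : ℝ) (hs : s ∈ Set.Ioo (-1 : ℝ) 1) (t : ℝ) :
    Φm (γv ω s t) =
      Complex.exp (Complex.I * ((ω + Real.pi / 2 : ℝ) : ℂ)) *
        ((((1 - s ^ 2) / (1 + s ^ 2) * Real.tanh t : ℝ) : ℂ) -
          Complex.I * (((2 * s / (1 + s ^ 2) : ℝ)) : ℂ)) ∧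
    Real.cos (-2 * Real.arctan s) = (1 - s ^ 2) / (1 + s ^ 2) ∧
    Real.sin (-2 * Real.arctan s) = -2 * s / (1 + s ^ 2) ∧
    Φm (γv ω s t) =
      γE (ω - Real.pi / 2 - (-2 * Real.arctan s)) (-2 * Real.arctan s)
        (Real.cos (-2 * Real.arctan s) * Real.tanh t) ∧
    deriv (fun τ : ℝ => Real.cos (-2 * Real.arctan s) * Real.tanh τ) t =
      (1 + s ^ 2) / (1 - s ^ 2) * xb (γv ω s t) ^ 2 := by
  obtain ⟨hs1, hs2⟩ := hs
  have hs3 : s^2 < 1 := by nlinarith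
  have hs4 : (1 : ℝ) - s^2 ≠ 0 := by nlinarith
  have hs5 : (1 : ℝ) + s^2 ≠ 0 := by positivity
  set x := Real.tanh (t/2) with hxdef
  have hxhat : xhat t = x := rfl
  -- positivity of denominators
  have hd1 : (0:ℝ) < 1 + s^2*x^2 := by positivity
  have hd2 : (0:ℝ) < 1 + x^2 := by positivity
  have hd3 : (0:ℝ) < 1 + s^2 := by positivity
  -- complex denominator nonzero
  have hns : Complex.normSq (1 + Complex.I * (s:ℂ) * (x:ℂ)) = 1 + s^2*x^2 := by
    simp [Complex.normSq_apply]
    ring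
  have hden : (1 + Complex.I * (s:ℂ) * (x:ℂ)) ≠ 0 := by
    intro h
    rw [h, map_zero] at hns
    nlinarith
  -- |γv|^2
  have habs : ‖γv ω s t‖ ^ 2 = (s^2 + x^2) / (1 + s^2*x^2) := by
    rw [γv, hxhat, norm_mul, norm_div, mul_pow, div_pow, Complex.norm_exp]
    have h1 : (Complex.I * (ω:ℂ)).re = 0 := by simp
    rw [h1, Real.exp_zero, one_pow, one_mul, Complex.sq_norm, Complex.sq_norm, hns]
    congr 1
    simp [Complex.normSq_apply]
    ring
  have htanh : Real.tanh t = 2*x/(1+x^2) := tanh_double t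
  -- exp splitting
  have hexp : Complex.exp (Complex.I * ((ω + Real.pi / 2 : ℝ) : ℂ)) =
      Complex.exp (Complex.I * (ω:ℂ)) * Complex.I := by
    have : ((ω + Real.pi/2 : ℝ) : ℂ) = (ω:ℂ) + (Real.pi/2 : ℝ) := by push_cast; ring
    rw [this, mul_add, Complex.exp_add]
    congr 1
    rw [mul_comm, Complex.exp_mul_I]
    push_cast
    simp
  -- part 1
  have hmain : Φm (γv ω s t) =
      Complex.exp (Complex.I * ((ω + Real.pi / 2 : ℝ) : ℂ)) *
        ((((1 - s ^ 2) / (1 + s ^ 2) * Real.tanh t : ℝ) : ℂ) -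
          Complex.I * (((2 * s / (1 + s ^ 2) : ℝ)) : ℂ)) := by
    rw [Φm, habs, hexp, γv, hxhat, htanh]
    have hA : (1:ℝ) + (s^2 + x^2)/(1+s^2*x^2) = (1+s^2)*(1+x^2)/(1+s^2*x^2) := by
      field_simp; ring
    rw [hA]
    have e1 : ((1+s^2*x^2 : ℝ) : ℂ) ≠ 0 := by exact_mod_cast hd1.ne'
    have e2 : ((1+x^2 : ℝ) : ℂ) ≠ 0 := by exact_mod_cast hd2.ne'
    have e3 : ((1+s^2 : ℝ) : ℂ) ≠ 0 := by exact_mod_cast hd3.ne'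
    push_cast
    push_cast at e1 e2 e3
    field_simp
    have hI3 : Complex.I ^ 3 = -Complex.I := by rw [pow_succ, Complex.I_sq]; ring
    ring_nf
    simp only [hI3, Complex.I_sq]
    ring
  -- trig identities
  have hcosa : Real.cos (Real.arctan s) = 1 / Real.sqrt (1 + s^2) := Real.cos_arctan s
  have hsina : Real.sin (Real.arctan s) = s / Real.sqrt (1 + s^2) := Real.sin_arctan s
  have hsq : Real.sqrt (1 + s^2) ^ 2 = 1 + s^2 := Real.sq_sqrt (by positivity)
  have hsqpos : (0:ℝ) < Real.sqrt (1 + s^2) := Real.sqrt_pos.2 (by positivity)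
  have hcos : Real.cos (-2 * Real.arctan s) = (1 - s ^ 2) / (1 + s ^ 2) := by
    have : (-2 : ℝ) * Real.arctan s = -(2 * Real.arctan s) := by ring
    rw [this, Real.cos_neg, Real.cos_two_mul, hcosa]
    rw [div_pow, one_pow, hsq]
    field_simp
    ring
  have hsin : Real.sin (-2 * Real.arctan s) = -2 * s / (1 + s ^ 2) := by
    have : (-2 : ℝ) * Real.arctan s = -(2 * Real.arctan s) := by ring
    rw [this, Real.sin_neg, Real.sin_two_mul, hsina, hcosa]
    field_simp
    rw [hsq]
  refine ⟨hmain, hcos, hsin, ?_, ?_⟩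
  · -- part 4
    rw [hmain, γE, hsin]
    have hang : Complex.I * ((ω - Real.pi/2 - (-2 * Real.arctan s) + (-2 * Real.arctan s) + Real.pi : ℝ) : ℂ)
        = Complex.I * ((ω + Real.pi/2 : ℝ) : ℂ) := by
      congr 1
      push_cast
      ring
    rw [hang, hcos]
    have hneg : ((-2*s/(1+s^2) : ℝ) : ℂ) = -(((2*s/(1+s^2) : ℝ)) : ℂ) := by
      push_cast; ring
    rw [hneg]
    ring
  · -- part 5
    have hderiv : deriv (fun τ : ℝ => Real.cos (-2 * Real.arctan s) * Real.tanh τ) t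
        = Real.cos (-2 * Real.arctan s) * (1 - Real.tanh t ^ 2) :=
      ((hasDerivAt_tanh' t).const_mul _).deriv
    rw [hderiv, hcos, xb, habs, htanh]
    have h1mT : 1 - (2*x/(1+x^2))^2 = ((1-x^2)/(1+x^2))^2 := by
      field_simp
      ring
    rw [h1mT]
    have hAB : (1 - (s^2+x^2)/(1+s^2*x^2)) / (1 + (s^2+x^2)/(1+s^2*x^2))
        = (1-s^2)*(1-x^2)/((1+s^2)*(1+x^2)) := by
      rw [div_eq_div_iff]
      · field_simp; ring
      · rw [show (1:ℝ) + (s^2+x^2)/(1+s^2*x^2) = (1+s^2)*(1+x^2)/(1+s^2*x^2) by field_simp; ring]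
        positivity
      · positivity
    rw [hAB]
    have key : ∀ a b : ℝ, 1+a^2 ≠ 0 → 1-a^2 ≠ 0 → 1+b^2 ≠ 0 →
        (1-a^2)/(1+a^2) * ((1-b^2)/(1+b^2))^2
          = (1+a^2)/(1-a^2) * ((1-a^2)*(1-b^2)/((1+a^2)*(1+b^2)))^2 := by
      intro a b h1 h2 h3
      field_simp
    exact key s x hs5 hs4 hd2.ne'
end
end

section
/- Cosphere-bundle parameterization: fix β ∈ ℝ, a ∈ ℝ with a ≠ 0, and C > 0. Let r(t) := |γ_{β,a}(t)| (then r(t) > 0 for all t) and x̃(t) := C(1−r(t))/(1+r(t)). Then (i) lim_{t→+∞} x̃′(t)/x̃(t) = −1 and lim_{t→−∞} x̃′(t)/x̃(t) = +1; and (ii) for all t ∈ ℝ, ((C² − x̃(t)²)/(2C))² · Im( γ′_{β,a}(t)/γ_{β,a}(t) ) / x̃(t)² = −a, where γ′_{β,a}(t) denotes the complex derivative in t; in particular the left-hand side of (ii) is constant in t. -/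
noncomputable section

/-- The geodesic boundary defining function pulled back along the geodesic:
`x̃(t) = C(1−r(t))/(1+r(t))` where `r(t) = |γ_{β,a}(t)|`. -/
def xtilde (C β a t : ℝ) : ℝ :=
  C * (1 - ‖γH β a t‖) / (1 + ‖γH β a t‖)

def NN (a s : ℝ) : ℂ := (2 + Complex.I * (a : ℂ)) * (s : ℂ) + Complex.I * (a : ℂ)
def DD (a s : ℝ) : ℂ := Complex.I * (a : ℂ) * (s : ℂ) - 2 + Complex.I * (a : ℂ)

lemma γH_eq (β a t : ℝ) : γH β a t =
    Complex.exp (Complex.I * (β : ℂ)) * (NN a (xhat t) / DD a (xhat t)) := rfl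

lemma xhat_mem (t : ℝ) : -1 < xhat t ∧ xhat t < 1 := by
  rw [xhat_eq]
  have h : 0 < Real.exp t + 1 := by positivity
  constructor
  · rw [lt_div_iff₀ h]; nlinarith [Real.exp_pos t]
  · rw [div_lt_iff₀ h]; nlinarith [Real.exp_pos t]

lemma hasDerivAt_xhat (t : ℝ) : HasDerivAt xhat ((1 - xhat t ^ 2) / 2) t := by
  have hne : ∀ x : ℝ, Real.exp x + 1 ≠ 0 := fun x => by positivity
  have H : HasDerivAt (fun x => (Real.exp x - 1) / (Real.exp x + 1))
      ((Real.exp t * (Real.exp t + 1) - (Real.exp t - 1) * Real.exp t) /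
        (Real.exp t + 1) ^ 2) t :=
    ((Real.hasDerivAt_exp t).sub_const 1).div ((Real.hasDerivAt_exp t).add_const 1) (hne t)
  have hfe : (fun x => (Real.exp x - 1) / (Real.exp x + 1)) = xhat :=
    funext fun x => (xhat_eq x).symm
  rw [hfe] at H
  convert H using 1
  rw [xhat_eq]
  field_simp
  ring

lemma normSq_NN (a s : ℝ) : Complex.normSq (NN a s) = 4 * s^2 + a^2 * (1+s)^2 := by
  simp [NN, Complex.normSq_apply, Complex.mul_re, Complex.mul_im, Complex.add_re, Complex.add_im]
  ring

lemma normSq_DD (a s : ℝ) : Complex.normSq (DD a s) = 4 + a^2 * (1+s)^2 := by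
  simp [DD, Complex.normSq_apply, Complex.mul_re, Complex.mul_im, Complex.add_re, Complex.add_im,
    Complex.sub_re, Complex.sub_im]
  ring

lemma DD_ne_zero (a s : ℝ) : DD a s ≠ 0 := by
  intro h
  have := normSq_DD a s
  rw [h, map_zero] at this
  nlinarith [sq_nonneg (a * (1+s))]

lemma NN_ne_zero {a : ℝ} (ha : a ≠ 0) {s : ℝ} (hs : -1 < s) : NN a s ≠ 0 := by
  intro h
  have h2 := normSq_NN a s
  rw [h, map_zero] at h2
  have h3 : 0 < a^2 * (1+s)^2 := by
    have : (0:ℝ) < a^2 := by positivity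
    have h4 : (0:ℝ) < (1+s)^2 := by nlinarith
    positivity
  nlinarith [sq_nonneg s]
open Real
noncomputable section
def Aa (a u : ℝ) : ℝ := (u - 1)^2 + a^2 * u^2
def Bb (a u : ℝ) : ℝ := (u + 1)^2 + a^2 * u^2

lemma Aa_pos {a u : ℝ} (ha : a ≠ 0) (hu : 0 < u) : 0 < Aa a u := by
  have : 0 < a^2 * u^2 := by positivity
  have := sq_nonneg (u - 1)
  unfold Aa; nlinarith

lemma Bb_pos (a : ℝ) {u : ℝ} (hu : 0 < u) : 0 < Bb a u := by
  have : 0 < (u+1)^2 := by positivity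
  have := sq_nonneg (a*u)
  unfold Bb; nlinarith

lemma sqrt_lt {a u : ℝ} (ha : a ≠ 0) (hu : 0 < u) :
    Real.sqrt (Aa a u) < Real.sqrt (Bb a u) := by
  apply Real.sqrt_lt_sqrt (Aa_pos ha hu).le
  unfold Aa Bb; nlinarith

lemma normSq_γH (β a t : ℝ) :
    Complex.normSq (γH β a t) = Aa a (Real.exp t) / Bb a (Real.exp t) := by
  have h1 : Complex.normSq (γH β a t) =
      Complex.normSq (NN a (xhat t)) / Complex.normSq (DD a (xhat t)) := by
    rw [γH_eq, map_mul, map_div₀, Complex.normSq_eq_norm_sq, Complex.norm_exp]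
    simp [Complex.mul_re]
  rw [h1, normSq_NN, normSq_DD, xhat_eq]
  have hu : (0:ℝ) < Real.exp t := Real.exp_pos t
  have h2 : Real.exp t + 1 ≠ 0 := by positivity
  have h3 : (4:ℝ) + a^2 * (1 + (Real.exp t - 1)/(Real.exp t + 1))^2 ≠ 0 := by
    have : (0:ℝ) ≤ a^2 * (1 + (Real.exp t - 1)/(Real.exp t + 1))^2 := by positivity
    nlinarith
  have h4 : Bb a (Real.exp t) ≠ 0 := (Bb_pos a hu).ne'
  unfold Aa Bb at *
  field_simp
  ring

lemma abs_γH (β a t : ℝ) :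
    ‖γH β a t‖ = Real.sqrt (Aa a (Real.exp t)) / Real.sqrt (Bb a (Real.exp t)) := by
  rw [Complex.norm_def, normSq_γH, Real.sqrt_div (by unfold Aa; positivity : (0:ℝ) ≤ Aa a (Real.exp t))]

lemma xtilde_eq {a : ℝ} (ha : a ≠ 0) (C β t : ℝ) :
    xtilde C β a t = 4 * C * Real.exp t /
      (Real.sqrt (Aa a (Real.exp t)) + Real.sqrt (Bb a (Real.exp t)))^2 := by
  have hu : (0:ℝ) < Real.exp t := Real.exp_pos t
  set u := Real.exp t
  set x := Real.sqrt (Aa a u) with hxdef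
  set y := Real.sqrt (Bb a u) with hydef
  have hx : 0 < x := Real.sqrt_pos.mpr (Aa_pos ha hu)
  have hy : 0 < y := Real.sqrt_pos.mpr (Bb_pos a hu)
  have hx2 : x^2 = Aa a u := Real.sq_sqrt (Aa_pos ha hu).le
  have hy2 : y^2 = Bb a u := Real.sq_sqrt (Bb_pos a hu).le
  have hyx : y^2 - x^2 = 4 * u := by rw [hx2, hy2]; unfold Aa Bb; ring
  have h1 : (1:ℝ) + x/y ≠ 0 := by positivity
  have h2 : ((x+y)^2 : ℝ) ≠ 0 := by positivity
  rw [xtilde, abs_γH, ← hxdef, ← hydef, div_eq_div_iff h1 h2]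
  field_simp
  linear_combination (C * (x + y)) * hyx

lemma xtilde_pos {a : ℝ} (ha : a ≠ 0) {C : ℝ} (hC : 0 < C) (β t : ℝ) :
    0 < xtilde C β a t := by
  rw [xtilde_eq ha]
  have hu : (0:ℝ) < Real.exp t := Real.exp_pos t
  have hx : 0 < Real.sqrt (Aa a (Real.exp t)) := Real.sqrt_pos.mpr (Aa_pos ha hu)
  have hy : 0 < Real.sqrt (Bb a (Real.exp t)) := Real.sqrt_pos.mpr (Bb_pos a hu)
  positivity

def hfun (a u : ℝ) : ℝ :=
  u * ((u - 1 + a^2*u) / Real.sqrt (Aa a u) + (u + 1 + a^2*u) / Real.sqrt (Bb a u)) /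
    (Real.sqrt (Aa a u) + Real.sqrt (Bb a u))

lemma hasDerivAt_xtilde {a : ℝ} (ha : a ≠ 0) (C β t : ℝ) :
    HasDerivAt (xtilde C β a) (xtilde C β a t * (1 - 2 * hfun a (Real.exp t))) t := by
  have hu : (0:ℝ) < Real.exp t := Real.exp_pos t
  have hx : 0 < Real.sqrt (Aa a (Real.exp t)) := Real.sqrt_pos.mpr (Aa_pos ha hu)
  have hy : 0 < Real.sqrt (Bb a (Real.exp t)) := Real.sqrt_pos.mpr (Bb_pos a hu)
  have hE := Real.hasDerivAt_exp t
  have hA : HasDerivAt (fun t => Aa a (Real.exp t))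
      ((2*(Real.exp t - 1) + 2*a^2*Real.exp t) * Real.exp t) t := by
    have h1 := (hE.sub_const 1).pow 2
    have h2 := (hE.pow 2).const_mul (a^2)
    have := h1.add h2
    simp only [Aa]
    refine this.congr_deriv ?_
    rw [show (2:ℕ) - 1 = 1 from rfl]
    push_cast
    ring
  have hB : HasDerivAt (fun t => Bb a (Real.exp t))
      ((2*(Real.exp t + 1) + 2*a^2*Real.exp t) * Real.exp t) t := by
    have h1 := (hE.add_const 1).pow 2
    have h2 := (hE.pow 2).const_mul (a^2)
    have := h1.add h2
    simp only [Bb]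
    refine this.congr_deriv ?_
    rw [show (2:ℕ) - 1 = 1 from rfl]
    push_cast
    ring
  have hsA := hA.sqrt (Aa_pos ha hu).ne'
  have hsB := hB.sqrt (Bb_pos a hu).ne'
  have hden := (hsA.add hsB).pow 2
  have hnum := hE.const_mul (4*C)
  have hxy : (0:ℝ) < Real.sqrt (Aa a (Real.exp t)) + Real.sqrt (Bb a (Real.exp t)) := by
    positivity
  have hden_ne : ((Real.sqrt (Aa a (Real.exp t)) + Real.sqrt (Bb a (Real.exp t)))^2 : ℝ) ≠ 0 := by
    positivity
  have hq := hnum.div hden hden_ne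
  have hfeq : (fun t => 4*C*Real.exp t /
      (Real.sqrt (Aa a (Real.exp t)) + Real.sqrt (Bb a (Real.exp t)))^2) = xtilde C β a :=
    funext fun t => (xtilde_eq ha C β t).symm
  replace hq : HasDerivAt (fun t => 4*C*Real.exp t /
      (Real.sqrt (Aa a (Real.exp t)) + Real.sqrt (Bb a (Real.exp t)))^2) _ t := hq
  rw [hfeq] at hq
  convert hq using 1
  simp only [Pi.add_apply, Pi.pow_apply]
  rw [xtilde_eq ha]
  unfold hfun
  set u := Real.exp t
  set x := Real.sqrt (Aa a u)
  set y := Real.sqrt (Bb a u)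
  field_simp
  ring

lemma ratio_eq {a : ℝ} (ha : a ≠ 0) {C : ℝ} (hC : 0 < C) (β t : ℝ) :
    deriv (xtilde C β a) t / xtilde C β a t = 1 - 2 * hfun a (Real.exp t) := by
  rw [(hasDerivAt_xtilde ha C β t).deriv, mul_comm, mul_div_assoc,
    div_self (xtilde_pos ha hC β t).ne', mul_one]

def φfun (a v : ℝ) : ℝ :=
  ((1 - v + a^2) / Real.sqrt ((1-v)^2 + a^2) + (1 + v + a^2) / Real.sqrt ((1+v)^2 + a^2)) /
    (Real.sqrt ((1-v)^2 + a^2) + Real.sqrt ((1+v)^2 + a^2))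

lemma hfun_eq {a u : ℝ} (ha : a ≠ 0) (hu : 0 < u) : hfun a u = φfun a (1/u) := by
  have ha2 : 0 < a^2 := by positivity
  have hw1 : 0 < (1-1/u)^2 + a^2 := by nlinarith [sq_nonneg (1-1/u)]
  have hw2 : 0 < (1+1/u)^2 + a^2 := by nlinarith [sq_nonneg (1+1/u)]
  have eA : Real.sqrt (Aa a u) = u * Real.sqrt ((1-1/u)^2 + a^2) := by
    have h : Aa a u = u^2 * ((1-1/u)^2 + a^2) := by unfold Aa; field_simp
    rw [h, Real.sqrt_mul (sq_nonneg u), Real.sqrt_sq hu.le]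
  have eB : Real.sqrt (Bb a u) = u * Real.sqrt ((1+1/u)^2 + a^2) := by
    have h : Bb a u = u^2 * ((1+1/u)^2 + a^2) := by unfold Bb; field_simp
    rw [h, Real.sqrt_mul (sq_nonneg u), Real.sqrt_sq hu.le]
  unfold hfun φfun
  rw [eA, eB]
  have hx : 0 < Real.sqrt ((1-1/u)^2 + a^2) := Real.sqrt_pos.mpr hw1
  have hy : 0 < Real.sqrt ((1+1/u)^2 + a^2) := Real.sqrt_pos.mpr hw2
  set x := Real.sqrt ((1-1/u)^2 + a^2)
  set y := Real.sqrt ((1+1/u)^2 + a^2)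
  have hxy : 0 < x + y := by positivity
  field_simp

lemma φfun_zero {a : ℝ} (ha : a ≠ 0) : φfun a 0 = 1 := by
  have h : (0:ℝ) < 1 + a^2 := by positivity
  have hs : 0 < Real.sqrt (1 + a^2) := Real.sqrt_pos.mpr h
  have hs2 : Real.sqrt (1 + a^2)^2 = 1 + a^2 := Real.sq_sqrt h.le
  unfold φfun
  norm_num
  set s := Real.sqrt (1 + a^2)
  exact hs.ne'

lemma continuousAt_φfun {a : ℝ} (ha : a ≠ 0) : ContinuousAt (φfun a) 0 := by
  have ha2 : (0:ℝ) < a^2 := by positivity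
  have hc1 : Continuous (fun v : ℝ => Real.sqrt ((1-v)^2 + a^2)) := by
    apply Real.continuous_sqrt.comp; continuity
  have hc2 : Continuous (fun v : ℝ => Real.sqrt ((1+v)^2 + a^2)) := by
    apply Real.continuous_sqrt.comp; continuity
  have h1 : (0:ℝ) < Real.sqrt ((1-(0:ℝ))^2 + a^2) := Real.sqrt_pos.mpr (by nlinarith)
  have h2 : (0:ℝ) < Real.sqrt ((1+(0:ℝ))^2 + a^2) := Real.sqrt_pos.mpr (by nlinarith)
  unfold φfun
  apply ContinuousAt.div
  · exact ((continuousAt_const.sub continuousAt_id).add continuousAt_const).div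
      hc1.continuousAt h1.ne' |>.add
      (((continuousAt_const.add continuousAt_id).add continuousAt_const).div
      hc2.continuousAt h2.ne')
  · exact hc1.continuousAt.add hc2.continuousAt
  · positivity

lemma continuousAt_hfun (a : ℝ) : ContinuousAt (hfun a) 0 := by
  have hcA : Continuous (fun u : ℝ => Real.sqrt (Aa a u)) := by
    apply Real.continuous_sqrt.comp; unfold Aa; continuity
  have hcB : Continuous (fun u : ℝ => Real.sqrt (Bb a u)) := by
    apply Real.continuous_sqrt.comp; unfold Bb; continuity
  have hA0 : Real.sqrt (Aa a 0) = 1 := by unfold Aa; norm_num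
  have hB0 : Real.sqrt (Bb a 0) = 1 := by unfold Bb; norm_num
  unfold hfun
  apply ContinuousAt.div
  · apply continuousAt_id.mul
    apply ContinuousAt.add
    · exact (by fun_prop : ContinuousAt (fun u:ℝ => u - 1 + a^2*u) 0).div
        hcA.continuousAt (by rw [hA0]; norm_num)
    · exact (by fun_prop : ContinuousAt (fun u:ℝ => u + 1 + a^2*u) 0).div
        hcB.continuousAt (by rw [hB0]; norm_num)
  · exact hcA.continuousAt.add hcB.continuousAt
  · rw [hA0, hB0]; norm_num

lemma hfun_zero (a : ℝ) : hfun a 0 = 0 := by unfold hfun; simp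

lemma tendsto_hfun_atTop {a : ℝ} (ha : a ≠ 0) :
    Filter.Tendsto (fun t : ℝ => hfun a (Real.exp t)) Filter.atTop (nhds 1) := by
  have h1 : Filter.Tendsto (fun t : ℝ => 1 / Real.exp t) Filter.atTop (nhds 0) := by
    simp only [one_div]
    exact tendsto_inv_atTop_zero.comp Real.tendsto_exp_atTop
  have h2 := ((continuousAt_φfun ha).tendsto.comp h1)
  rw [φfun_zero ha] at h2
  refine h2.congr fun t => ?_
  exact (hfun_eq ha (Real.exp_pos t)).symm

lemma tendsto_hfun_atBot (a : ℝ) :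
    Filter.Tendsto (fun t : ℝ => hfun a (Real.exp t)) Filter.atBot (nhds 0) := by
  have h2 := (continuousAt_hfun a).tendsto.comp Real.tendsto_exp_atBot
  rwa [hfun_zero a] at h2

lemma W_eq (a s : ℝ) :
    (2 + Complex.I*(a:ℂ)) * DD a s - Complex.I*(a:ℂ) * NN a s = -4 := by
  unfold NN DD; ring

lemma hasDerivAt_γH (β a t : ℝ) :
    HasDerivAt (γH β a)
      (Complex.exp (Complex.I*(β:ℂ)) *
        (((2 + Complex.I*(a:ℂ)) * (((1 - xhat t^2)/2 : ℝ) : ℂ) * DD a (xhat t)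
          - NN a (xhat t) * (Complex.I*(a:ℂ) * (((1 - xhat t^2)/2 : ℝ) : ℂ))) /
            (DD a (xhat t))^2)) t := by
  have hx : HasDerivAt (fun t => ((xhat t : ℝ) : ℂ)) (((1 - xhat t^2)/2 : ℝ) : ℂ) t :=
    (hasDerivAt_xhat t).ofReal_comp
  have hN : HasDerivAt (fun t => NN a (xhat t))
      ((2 + Complex.I*(a:ℂ)) * (((1 - xhat t^2)/2 : ℝ):ℂ)) t := by
    unfold NN; exact (hx.const_mul _).add_const _
  have hD : HasDerivAt (fun t => DD a (xhat t))
      (Complex.I*(a:ℂ) * (((1 - xhat t^2)/2 : ℝ):ℂ)) t := by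
    unfold DD
    exact ((hx.const_mul _).sub_const _).add_const _
  have hq := (hN.div hD (DD_ne_zero a (xhat t))).const_mul (Complex.exp (Complex.I*(β:ℂ)))
  have hfeq : (fun t => Complex.exp (Complex.I*(β:ℂ)) * (NN a (xhat t) / DD a (xhat t)))
      = γH β a := funext fun t => (γH_eq β a t).symm
  rw [← hfeq]
  exact hq

lemma ratio_γ {a : ℝ} (ha : a ≠ 0) (β t : ℝ) :
    deriv (γH β a) t / γH β a t =
      (-4 * (((1 - xhat t^2)/2 : ℝ) : ℂ)) / (NN a (xhat t) * DD a (xhat t)) := by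
  rw [(hasDerivAt_γH β a t).deriv, γH_eq]
  have hN := NN_ne_zero ha (xhat_mem t).1
  have hD := DD_ne_zero a (xhat t)
  have hE : Complex.exp (Complex.I*(β:ℂ)) ≠ 0 := Complex.exp_ne_zero _
  have hW := W_eq a (xhat t)
  set s := xhat t
  set d : ℂ := (((1 - s^2)/2 : ℝ) : ℂ) with hd
  field_simp
  linear_combination d * hW

lemma im_ratio {a : ℝ} (ha : a ≠ 0) {s : ℝ} (hs1 : -1 < s) (hs2 : s < 1) :
    ((-4 * (((1 - s^2)/2 : ℝ) : ℂ)) / (NN a s * DD a s)).im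
      = -4*a*(1-s^2)^2 / ((4*s^2 + a^2*(1+s)^2) * (4 + a^2*(1+s)^2)) := by
  have hP : (0:ℝ) < 4*s^2 + a^2*(1+s)^2 := by
    have h1 : (0:ℝ) < a^2 := by positivity
    have h2 : (0:ℝ) < (1+s)^2 := by nlinarith
    nlinarith [sq_nonneg s, mul_pos h1 h2]
  have hQ : (0:ℝ) < 4 + a^2*(1+s)^2 := by positivity
  rw [Complex.div_im]
  have hns : Complex.normSq (NN a s * DD a s) =
      (4*s^2 + a^2*(1+s)^2) * (4 + a^2*(1+s)^2) := by
    rw [map_mul, normSq_NN, normSq_DD]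
  rw [hns]
  simp only [NN, DD, Complex.mul_im, Complex.mul_re, Complex.add_im, Complex.add_re,
    Complex.sub_im, Complex.sub_re, Complex.ofReal_re, Complex.ofReal_im, Complex.I_re,
    Complex.I_im, Complex.re_ofNat, Complex.im_ofNat, Complex.neg_re, Complex.neg_im]
  field_simp
  ring

lemma alg {a s rr C : ℝ} (hC : 0 < C) (hs1 : -1 < s) (hs2 : s < 1)
    (hr0 : 0 < rr) (hr1 : rr < 1)
    (hrr : rr^2 = (4*s^2 + a^2*(1+s)^2) / (4 + a^2*(1+s)^2)) :
    ((C^2 - (C * (1 - rr) / (1 + rr))^2)/(2*C))^2 *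
      (-4*a*(1-s^2)^2 / ((4*s^2+a^2*(1+s)^2)*(4+a^2*(1+s)^2))) /
      (C * (1 - rr) / (1 + rr))^2 = -a := by
  have hQ : (0:ℝ) < 4 + a^2*(1+s)^2 := by positivity
  have hP : (0:ℝ) < 4*s^2 + a^2*(1+s)^2 := by
    have h : rr^2 * (4 + a^2*(1+s)^2) = 4*s^2 + a^2*(1+s)^2 := by
      rw [hrr]; field_simp
    nlinarith [mul_pos (pow_pos hr0 2) hQ]
  have h1p : (0:ℝ) < 1 + rr := by linarith
  have h1m : (0:ℝ) < 1 - rr := by linarith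
  set x := C * (1 - rr) / (1 + rr) with hx
  have hF : ((C^2 - x^2)/(2*C))^2 / x^2 = 4*rr^2/(1-rr^2)^2 := by
    rw [hx]
    have hrr2 : (1:ℝ) - rr^2 ≠ 0 := by nlinarith
    field_simp
    ring
  have hgoal : ((C^2 - x^2)/(2*C))^2 *
      (-4*a*(1-s^2)^2 / ((4*s^2+a^2*(1+s)^2)*(4+a^2*(1+s)^2))) / x^2
      = (((C^2 - x^2)/(2*C))^2 / x^2) *
        (-4*a*(1-s^2)^2 / ((4*s^2+a^2*(1+s)^2)*(4+a^2*(1+s)^2))) := by ring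
  rw [hgoal, hF, hrr]
  have hs : (0:ℝ) < 1 - s^2 := by nlinarith
  have h2 : (1:ℝ) - (4*s^2 + a^2*(1+s)^2) / (4 + a^2*(1+s)^2)
      = 4*(1-s^2) / (4 + a^2*(1+s)^2) := by
    field_simp
    ring
  rw [h2]
  field_simp

lemma γH_ne_zero {a : ℝ} (ha : a ≠ 0) (β t : ℝ) : γH β a t ≠ 0 := by
  rw [γH_eq]
  exact mul_ne_zero (Complex.exp_ne_zero _)
    (div_ne_zero (NN_ne_zero ha (xhat_mem t).1) (DD_ne_zero _ _))

lemma normSq_γH' (β a t : ℝ) : Complex.normSq (γH β a t)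
    = (4*(xhat t)^2 + a^2*(1+xhat t)^2) / (4 + a^2*(1+xhat t)^2) := by
  have h1 : Complex.normSq (γH β a t) =
      Complex.normSq (NN a (xhat t)) / Complex.normSq (DD a (xhat t)) := by
    rw [γH_eq, map_mul, map_div₀, Complex.normSq_eq_norm_sq, Complex.norm_exp]
    simp [Complex.mul_re]
  rw [h1, normSq_NN, normSq_DD]

/-- Cosphere-bundle parameterization: for `a ≠ 0` and `C > 0`, letting
`r(t) = |γ_{β,a}(t)| > 0` and `x̃(t) = C(1−r(t))/(1+r(t))`, one has
(i) `x̃′/x̃ → −1` as `t → +∞` and `x̃′/x̃ → +1` as `t → −∞`; and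
(ii) `((C² − x̃(t)²)/(2C))² · Im(γ′_{β,a}(t)/γ_{β,a}(t)) / x̃(t)² = −a` for all `t`. -/
theorem cosphere_parameterization (β a : ℝ) (ha : a ≠ 0) (C : ℝ) (hC : 0 < C) :
    (∀ t : ℝ, 0 < ‖γH β a t‖) ∧
    Filter.Tendsto (fun t : ℝ => deriv (xtilde C β a) t / xtilde C β a t)
      Filter.atTop (nhds (-1)) ∧
    Filter.Tendsto (fun t : ℝ => deriv (xtilde C β a) t / xtilde C β a t)
      Filter.atBot (nhds 1) ∧
    ∀ t : ℝ,
      ((C ^ 2 - xtilde C β a t ^ 2) / (2 * C)) ^ 2 *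
          (deriv (γH β a) t / γH β a t).im / xtilde C β a t ^ 2 = -a := by
  have hfe : (fun t : ℝ => deriv (xtilde C β a) t / xtilde C β a t)
      = fun t : ℝ => 1 - 2 * hfun a (Real.exp t) :=
    funext fun t => ratio_eq ha hC β t
  refine ⟨fun t => norm_pos_iff.mpr (γH_ne_zero ha β t), ?_, ?_, ?_⟩
  · rw [hfe]
    have h1 := ((tendsto_hfun_atTop ha).const_mul (2:ℝ)).const_sub (1:ℝ)
    norm_num at h1
    exact h1
  · rw [hfe]
    have h1 := ((tendsto_hfun_atBot a).const_mul (2:ℝ)).const_sub (1:ℝ)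
    norm_num at h1
    exact h1
  · intro t
    set s := xhat t with hsdef
    obtain ⟨hs1, hs2⟩ := xhat_mem t
    set rr := ‖γH β a t‖ with hrdef
    have hQ : (0:ℝ) < 4 + a^2*(1+s)^2 := by positivity
    have hrr2 : rr^2 = (4*s^2 + a^2*(1+s)^2) / (4 + a^2*(1+s)^2) := by
      rw [hrdef, Complex.sq_norm, normSq_γH' β a t]
    have hr0 : 0 < rr := norm_pos_iff.mpr (γH_ne_zero ha β t)
    have hr1 : rr < 1 := by
      have h2 : rr^2 < 1 := by
        rw [hrr2]
        apply div_lt_one hQ |>.mpr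
        nlinarith
      nlinarith
    have him : (deriv (γH β a) t / γH β a t).im
        = -4*a*(1-s^2)^2 / ((4*s^2 + a^2*(1+s)^2) * (4 + a^2*(1+s)^2)) := by
      rw [ratio_γ ha β t]
      exact im_ratio ha hs1 hs2
    have hxt : xtilde C β a t = C * (1 - rr) / (1 + rr) := rfl
    rw [him, hxt]
    exact alg hC hs1 hs2 hr0 hr1 hrr2
end
end
end

section
/- Santaló's formula in horocyclic coordinates: for every continuous function f : ℂ × ℂ → ℝ whose support is contained in K × ℂ for some compact K inside the open unit disk, ∫₀^{2π} ∫_ℝ ∫_ℝ f(γ_{β,a}(t), γ′_{β,a}(t)) dt da dβ = ∫_{|z|<1} (2/(1−|z|²))² · ( ∫₀^{2π} f(z, ((1−|z|²)/2)·e^{iθ}) dθ ) dλ(z), where γ′_{β,a}(t) is the complex derivative in t and dλ is Lebesgue measure on ℂ ≅ ℝ². -/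
open MeasureTheory

noncomputable section

namespace Santalo
open Complex

/-- ζ = e^{-t} - i a where w = a + t i -/
def zm (w : ℂ) : ℂ := (Real.exp (-w.im) : ℂ) - w.re * I

def Gm (β : ℝ) (w : ℂ) : ℂ := Complex.exp (I * β) * ((zm w - 1) / (zm w + 1))

lemma zm_re (w : ℂ) : (zm w).re = Real.exp (-w.im) := by
  simp [zm, ← Complex.ofReal_exp]

lemma zm_im (w : ℂ) : (zm w).im = -w.re := by
  simp [zm, ← Complex.ofReal_exp]

lemma zm_add_one_ne (w : ℂ) : zm w + 1 ≠ 0 := by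
  intro h
  have h1 : (zm w + 1).re = 0 := by rw [h]; simp
  rw [Complex.add_re, zm_re, Complex.one_re] at h1
  nlinarith [Real.exp_pos (-w.im)]

lemma xhat_eq (t : ℝ) : xhat t = (Real.exp t - 1) / (Real.exp t + 1) := by
  have h1 : Real.exp (t/2) * Real.exp (t/2) = Real.exp t := by
    rw [← Real.exp_add]; ring_nf
  have h2 : Real.exp (t/2) > 0 := Real.exp_pos _
  have h3 : Real.exp t + 1 > 0 := by positivity
  rw [xhat, Real.tanh_eq_sinh_div_cosh, Real.sinh_eq, Real.cosh_eq]
  rw [Real.exp_neg]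
  field_simp
  nlinarith [h1]

lemma gamma_eq (β a t : ℝ) : γH β a t = Gm β ((a : ℂ) + (t : ℂ) * I) := by
  have hre : ((a : ℂ) + (t : ℂ) * I).re = a := by simp
  have him : ((a : ℂ) + (t : ℂ) * I).im = t := by simp
  have hE : (0:ℝ) < Real.exp t := Real.exp_pos t
  have hzm : zm ((a : ℂ) + (t : ℂ) * I) = ((Real.exp t)⁻¹ : ℝ) - (a:ℂ) * I := by
    rw [zm, hre, him, Real.exp_neg]
  have hden := zm_add_one_ne ((a : ℂ) + (t : ℂ) * I)
  rw [hzm] at hden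
  rw [γH, Gm, hzm, xhat_eq]
  congr 1
  have hx : ((((Real.exp t - 1) / (Real.exp t + 1) : ℝ)) : ℂ)
      = ((Real.exp t : ℂ) - 1) / ((Real.exp t : ℂ) + 1) := by push_cast; ring
  rw [hx]
  have hE0 : (Real.exp t : ℂ) ≠ 0 := by
    exact_mod_cast (ne_of_gt hE)
  have hE1 : (Real.exp t : ℂ) + 1 ≠ 0 := by
    intro h
    have h1 : ((Real.exp t : ℂ) + 1).re = 0 := by rw [h]; simp
    simp only [Complex.add_re, Complex.ofReal_re, Complex.one_re] at h1
    nlinarith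
  have hd2 : Complex.I * (a:ℂ) * (((Real.exp t : ℂ) - 1) / ((Real.exp t : ℂ) + 1)) - 2
      + Complex.I * (a:ℂ) ≠ 0 := by
    intro h
    have h1 := congrArg Complex.re h
    rw [div_eq_mul_inv] at h1
    have : ((Real.exp t : ℂ) + 1)⁻¹ = (((Real.exp t + 1)⁻¹ : ℝ) : ℂ) := by
      push_cast; ring
    rw [this] at h1
    have h2 : ((Real.exp t : ℂ) - 1) = (((Real.exp t - 1 : ℝ)) : ℂ) := by push_cast; ring
    rw [h2] at h1
    simp [Complex.add_re, Complex.sub_re, Complex.mul_re, Complex.mul_im] at h1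
  have hinv : (((Real.exp t)⁻¹ : ℝ) : ℂ) = ((Real.exp t : ℂ))⁻¹ := by push_cast; ring
  rw [hinv] at hden ⊢
  set E : ℂ := (Real.exp t : ℂ) with hEdef
  rw [div_eq_div_iff hd2 hden]
  field_simp
  ring
end Santalo

namespace Santalo
open Complex

lemma den_ne (a x : ℝ) : I * (a:ℂ) * (x:ℂ) - 2 + I * (a:ℂ) ≠ 0 := by
  intro h
  have h1 := congrArg Complex.re h
  simp [Complex.add_re, Complex.sub_re, Complex.mul_re] at h1

lemma hasDerivAt_xhat (t : ℝ) : HasDerivAt xhat ((1 - xhat t ^ 2) / 2) t := by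
  have hfun : xhat = fun s => (Real.exp s - 1) / (Real.exp s + 1) := funext xhat_eq
  rw [hfun]
  have hE : 0 < Real.exp t := Real.exp_pos t
  have hne : Real.exp t + 1 ≠ 0 := by positivity
  have h1 : HasDerivAt (fun s => Real.exp s - 1) (Real.exp t) t :=
    (Real.hasDerivAt_exp t).sub_const 1
  have h2 : HasDerivAt (fun s => Real.exp s + 1) (Real.exp t) t :=
    (Real.hasDerivAt_exp t).add_const 1
  have := h1.div h2 hne
  refine this.congr_deriv ?_
  beta_reduce
  field_simp
  ring

lemma hasDerivAt_gamma (β a t : ℝ) :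
    HasDerivAt (γH β a)
      (-2 * Complex.exp (I * β) * (1 - (xhat t : ℂ)^2)
        / (I * (a:ℂ) * (xhat t : ℂ) - 2 + I * (a:ℂ))^2) t := by
  have hx : HasDerivAt (fun s : ℝ => ((xhat s : ℝ) : ℂ)) (((1 - xhat t ^ 2) / 2 : ℝ) : ℂ) t :=
    (hasDerivAt_xhat t).ofReal_comp
  have hnum : HasDerivAt (fun s : ℝ => (2 + I * (a:ℂ)) * ((xhat s : ℝ) : ℂ) + I * (a:ℂ))
      ((2 + I * (a:ℂ)) * (((1 - xhat t ^ 2) / 2 : ℝ) : ℂ)) t :=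
    (hx.const_mul _).add_const _
  have hden : HasDerivAt (fun s : ℝ => I * (a:ℂ) * ((xhat s : ℝ) : ℂ) - 2 + I * (a:ℂ))
      (I * (a:ℂ) * (((1 - xhat t ^ 2) / 2 : ℝ) : ℂ)) t := by
    exact ((hx.const_mul _).sub_const _).add_const _
  have hq := hnum.div hden (den_ne a (xhat t))
  have := hq.const_mul (Complex.exp (I * β))
  refine this.congr_deriv ?_
  have hd := den_ne a (xhat t)
  push_cast
  ring

lemma deriv_gamma (β a t : ℝ) :
    deriv (γH β a) t =
      -2 * Complex.exp (I * β) * (1 - (xhat t : ℂ)^2)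
        / (I * (a:ℂ) * (xhat t : ℂ) - 2 + I * (a:ℂ))^2 :=
  (hasDerivAt_gamma β a t).deriv

end Santalo

namespace Santalo
open Complex

def qz (β : ℝ) (z : ℂ) : ℂ := 1 - Complex.exp (-(I * β)) * z

def Vm (β : ℝ) (z : ℂ) : ℂ :=
  -(((1 - ‖z‖ ^ 2) / 2 : ℝ) : ℂ) * Complex.exp (I * β) * qz β z
    / (starRingEnd ℂ) (qz β z)

/-- real Jacobian factor expressed in terms of `z` -/
def Dd (β : ℝ) (z : ℂ) : ℝ := (1 - Complex.normSq z) * Complex.normSq (qz β z) / 4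

lemma exp_cancel (β : ℝ) : Complex.exp (-(I * β)) * Complex.exp (I * β) = 1 := by
  rw [← Complex.exp_add]; simp

lemma exp_I_ne (β : ℝ) : Complex.exp (I * β) ≠ 0 := Complex.exp_ne_zero _

lemma normSq_exp_I (β : ℝ) : Complex.normSq (Complex.exp (I * β)) = 1 := by
  have h : ‖Complex.exp (I * β)‖ = 1 := by
    rw [Complex.norm_exp]; simp
  rw [← Complex.sq_norm, h]; norm_num

lemma qz_Gm (β : ℝ) (w : ℂ) : qz β (Gm β w) = 2 / (zm w + 1) := by
  have h := zm_add_one_ne w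
  have hcancel : Complex.exp (-(I * ↑β)) * (Complex.exp (I * ↑β) * ((zm w - 1) / (zm w + 1)))
      = (zm w - 1) / (zm w + 1) := by
    rw [← mul_assoc, exp_cancel, one_mul]
  rw [qz, Gm, hcancel]
  field_simp
  ring

lemma one_sub_normSq_Gm (β : ℝ) (w : ℂ) :
    1 - Complex.normSq (Gm β w) = 4 * (zm w).re / Complex.normSq (zm w + 1) := by
  have h := zm_add_one_ne w
  have hN : Complex.normSq (zm w + 1) ≠ 0 := by
    simpa [Complex.normSq_eq_zero] using h
  rw [Gm, Complex.normSq_mul, normSq_exp_I, one_mul, Complex.normSq_div]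
  field_simp
  simp only [Complex.normSq_apply, Complex.add_re, Complex.add_im, Complex.sub_re,
    Complex.sub_im, Complex.one_re, Complex.one_im]
  ring

lemma Vm_Gm (β : ℝ) (w : ℂ) :
    Vm β (Gm β w) = -2 * ((zm w).re : ℂ) * Complex.exp (I * β) / (zm w + 1)^2 := by
  have h := zm_add_one_ne w
  have hc : (starRingEnd ℂ) (zm w + 1) ≠ 0 := by
    intro hcc
    apply h
    have := congrArg (starRingEnd ℂ) hcc
    simpa using this
  have habs : (‖Gm β w‖ ^ 2 : ℝ) = Complex.normSq (Gm β w) := Complex.sq_norm _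
  rw [Vm, qz_Gm, habs, one_sub_normSq_Gm]
  rw [map_div₀]
  have hconj2 : (starRingEnd ℂ) (2 : ℂ) = 2 := by
    exact map_ofNat _ 2
  rw [hconj2]
  have hN : Complex.normSq (zm w + 1) ≠ 0 := by simpa [Complex.normSq_eq_zero] using h
  have hcast : (((4 * (zm w).re / Complex.normSq (zm w + 1) / 2 : ℝ)) : ℂ)
      = 4 * ((zm w).re : ℂ) / ((Complex.normSq (zm w + 1) : ℝ) : ℂ) / 2 := by
    push_cast; ring
  rw [hcast]
  have hmc : ((Complex.normSq (zm w + 1) : ℝ) : ℂ)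
      = (zm w + 1) * (starRingEnd ℂ) (zm w + 1) := (Complex.mul_conj _).symm
  set u := zm w + 1 with hu
  set c := (starRingEnd ℂ) (zm w + 1) with hcdef
  rw [hmc, div_div_eq_mul_div]
  field_simp
  ring

lemma deriv_gamma_eq_Vm (β a t : ℝ) : deriv (γH β a) t = Vm β (γH β a t) := by
  rw [deriv_gamma, gamma_eq, Vm_Gm]
  have hE : (0:ℝ) < Real.exp t := Real.exp_pos t
  have hre : ((a : ℂ) + (t : ℂ) * I).re = a := by simp
  have him : ((a : ℂ) + (t : ℂ) * I).im = t := by simp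
  have hzm : zm ((a : ℂ) + (t : ℂ) * I) = ((Real.exp t)⁻¹ : ℝ) - (a:ℂ) * I := by
    rw [zm, hre, him, Real.exp_neg]
  have hzre : (zm ((a : ℂ) + (t : ℂ) * I)).re = (Real.exp t)⁻¹ := by
    rw [zm_re, him, Real.exp_neg]
  have hden := zm_add_one_ne ((a : ℂ) + (t : ℂ) * I)
  rw [hzm] at hden
  rw [hzre, hzm, xhat_eq]
  have hx : ((((Real.exp t - 1) / (Real.exp t + 1) : ℝ)) : ℂ)
      = ((Real.exp t : ℂ) - 1) / ((Real.exp t : ℂ) + 1) := by push_cast; ring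
  rw [hx]
  have hE0 : (Real.exp t : ℂ) ≠ 0 := by exact_mod_cast (ne_of_gt hE)
  have hE1 : (Real.exp t : ℂ) + 1 ≠ 0 := by
    intro hcon
    have h1 : ((Real.exp t : ℂ) + 1).re = 0 := by rw [hcon]; simp
    simp only [Complex.add_re, Complex.ofReal_re, Complex.one_re] at h1
    nlinarith
  have hd2 := den_ne a ((Real.exp t - 1) / (Real.exp t + 1))
  rw [hx] at hd2
  have hinv : (((Real.exp t)⁻¹ : ℝ) : ℂ) = ((Real.exp t : ℂ))⁻¹ := by push_cast; ring
  rw [hinv] at hden ⊢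
  set E : ℂ := (Real.exp t : ℂ) with hEdef
  rw [div_eq_div_iff (pow_ne_zero 2 hd2) (pow_ne_zero 2 hden)]
  field_simp
  ring

lemma Dd_Gm (β : ℝ) (w : ℂ) :
    Dd β (Gm β w) = 4 * (zm w).re / (Complex.normSq (zm w + 1))^2 := by
  have h := zm_add_one_ne w
  have hN : Complex.normSq (zm w + 1) ≠ 0 := by simpa [Complex.normSq_eq_zero] using h
  rw [Dd, one_sub_normSq_Gm, qz_Gm, Complex.normSq_div]
  have h2 : Complex.normSq (2 : ℂ) = 4 := by
    simp [Complex.normSq_apply]; norm_num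
  rw [h2]
  field_simp

end Santalo

namespace Santalo
open Complex

/-- determinant of a real-linear map on ℂ from its values at 1 and I -/
lemma det_clm_eq (L : ℂ →L[ℝ] ℂ) :
    L.det = (L 1).re * (L I).im - (L I).re * (L 1).im := by
  rw [ContinuousLinearMap.det, ← LinearMap.det_toMatrix Complex.basisOneI,
    Matrix.det_fin_two]
  simp [LinearMap.toMatrix_apply, Complex.coe_basisOneI_repr, Complex.coe_basisOneI]

def Lder (e : ℝ) : ℂ →L[ℝ] ℂ :=
  Complex.ofRealCLM.comp (e • (-Complex.imCLM)) - Complex.reCLM.smulRight Complex.I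

lemma Lder_one (e : ℝ) : Lder e 1 = -I := by
  simp [Lder]

lemma Lder_I (e : ℝ) : Lder e I = (-e : ℝ) := by
  simp [Lder]

lemma det_Lder (e : ℝ) : (Lder e).det = -e := by
  rw [det_clm_eq, Lder_one, Lder_I]
  simp

lemma hasFDerivAt_zm (w : ℂ) : HasFDerivAt zm (Lder (Real.exp (-w.im))) w := by
  have h1 : HasFDerivAt (fun v : ℂ => -v.im) (-Complex.imCLM) w :=
    (Complex.imCLM.hasFDerivAt).neg
  have h2 : HasDerivAt Real.exp (Real.exp (-w.im)) (-w.im) := Real.hasDerivAt_exp _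
  have h3 : HasFDerivAt (fun v : ℂ => Real.exp (-v.im))
      (Real.exp (-w.im) • (-Complex.imCLM)) w := h2.comp_hasFDerivAt (f := fun v : ℂ => -v.im) w h1
  have h4 : HasFDerivAt (fun v : ℂ => ((Real.exp (-v.im) : ℝ) : ℂ))
      (Complex.ofRealCLM.comp (Real.exp (-w.im) • (-Complex.imCLM))) w :=
    Complex.ofRealCLM.hasFDerivAt.comp w h3
  have h5 : HasFDerivAt (fun v : ℂ => (v.re : ℂ) * I)
      (Complex.reCLM.smulRight I) w := by
    have h := (Complex.reCLM.smulRight I).hasFDerivAt (x := w)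
    apply h.congr_of_eventuallyEq
    filter_upwards with v
    simp [Complex.real_smul]
  exact h4.sub h5

def DGm (β : ℝ) (w : ℂ) : ℂ →L[ℝ] ℂ :=
  (((1 : ℂ →L[ℂ] ℂ).smulRight (2 * Complex.exp (I * β) / (zm w + 1)^2)).restrictScalars ℝ).comp
    (Lder (Real.exp (-w.im)))

lemma hasFDerivAt_Gm (β : ℝ) (w : ℂ) : HasFDerivAt (Gm β) (DGm β w) w := by
  have hden := zm_add_one_ne w
  have hnum : HasDerivAt (fun ζ : ℂ => ζ - 1) 1 (zm w) := (hasDerivAt_id _).sub_const 1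
  have hden' : HasDerivAt (fun ζ : ℂ => ζ + 1) 1 (zm w) := (hasDerivAt_id _).add_const 1
  have hq := hnum.div hden' hden
  have hc := hq.const_mul (Complex.exp (I * β))
  have hc2 : HasDerivAt (fun ζ : ℂ => Complex.exp (I * β) * ((ζ - 1) / (ζ + 1)))
      (2 * Complex.exp (I * β) / (zm w + 1)^2) (zm w) := by
    refine hc.congr_deriv ?_
    ring
  exact (hc2.hasFDerivAt.restrictScalars ℝ).comp w (hasFDerivAt_zm w)

lemma det_DGm (β : ℝ) (w : ℂ) :
    (DGm β w).det =
      -(Complex.normSq (2 * Complex.exp (I * β) / (zm w + 1)^2) * Real.exp (-w.im)) := by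
  rw [DGm, ContinuousLinearMap.det, ContinuousLinearMap.toLinearMap_comp, LinearMap.det_comp]
  have h1 : LinearMap.det
      (((((1 : ℂ →L[ℂ] ℂ).smulRight (2 * Complex.exp (I * β) / (zm w + 1)^2)).restrictScalars ℝ)
        : ℂ →L[ℝ] ℂ) : ℂ →ₗ[ℝ] ℂ )
      = Complex.normSq (2 * Complex.exp (I * β) / (zm w + 1)^2) := by
    rw [← ContinuousLinearMap.det, det_clm_eq]
    set c := 2 * Complex.exp (I * β) / (zm w + 1)^2
    have e1 : (((1 : ℂ →L[ℂ] ℂ).smulRight c).restrictScalars ℝ) (1 : ℂ) = c := by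
      simp
    have e2 : (((1 : ℂ →L[ℂ] ℂ).smulRight c).restrictScalars ℝ) (I : ℂ) = I * c := by
      simp
    rw [e1, e2, Complex.normSq_apply]
    simp [Complex.mul_re, Complex.mul_im]
  rw [h1, ← ContinuousLinearMap.det, det_Lder]
  ring

lemma abs_det_DGm (β : ℝ) (w : ℂ) :
    |(DGm β w).det| = Dd β (Gm β w) := by
  rw [det_DGm, Dd_Gm, abs_neg,
    _root_.abs_of_nonneg (mul_nonneg (Complex.normSq_nonneg _) (Real.exp_pos _).le)]
  have hN : Complex.normSq (zm w + 1) ≠ 0 := by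
    simpa [Complex.normSq_eq_zero] using zm_add_one_ne w
  rw [Complex.normSq_div, Complex.normSq_mul, normSq_exp_I, map_pow]
  have h2 : Complex.normSq (2 : ℂ) = 4 := by simp [Complex.normSq_apply]; norm_num
  rw [h2, zm_re]
  field_simp
end Santalo

namespace Santalo
open Complex

lemma zm_re_pos (w : ℂ) : 0 < (zm w).re := by
  rw [zm_re]; exact Real.exp_pos _

def zb (β : ℝ) (z : ℂ) : ℂ := (1 + Complex.exp (-(I * β)) * z) / qz β z

def Gi (β : ℝ) (z : ℂ) : ℂ :=
  ((-(zb β z).im : ℝ) : ℂ) + ((-(Real.log ((zb β z).re)) : ℝ) : ℂ) * I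

lemma abs_exp_neg_I (β : ℝ) : ‖Complex.exp (-(I * β))‖ = 1 := by
  rw [Complex.norm_exp]; simp

lemma qz_ne (β : ℝ) {z : ℂ} (hz : ‖z‖ < 1) : qz β z ≠ 0 := by
  intro h
  have h1 : ‖Complex.exp (-(I * β)) * z‖ = ‖z‖ := by
    rw [norm_mul, abs_exp_neg_I, one_mul]
  have h2 : Complex.exp (-(I * β)) * z = 1 := by
    have := sub_eq_zero.mp h
    linear_combination -this
  rw [h2] at h1
  simp at h1
  rw [← h1] at hz
  exact lt_irrefl _ hz

lemma normSq_qz (β : ℝ) (z : ℂ) :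
    Complex.normSq (qz β z) ≠ 0 ↔ qz β z ≠ 0 := by
  simp [Complex.normSq_eq_zero]

lemma re_zb (β : ℝ) (z : ℂ) :
    (zb β z).re = (1 - Complex.normSq z) / Complex.normSq (qz β z) := by
  rw [zb, Complex.div_re]
  have hu : Complex.normSq (Complex.exp (-(I * β)) * z) = Complex.normSq z := by
    rw [Complex.normSq_mul, ← Complex.sq_norm (Complex.exp _), abs_exp_neg_I]
    norm_num
  rw [qz]
  set u := Complex.exp (-(I * β)) * z
  have : (1 + u).re * (1 - u).re + (1 + u).im * (1 - u).im = 1 - Complex.normSq u := by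
    simp [Complex.normSq_apply, Complex.add_re, Complex.add_im, Complex.sub_re,
      Complex.sub_im]
    ring
  rw [← add_div, this, hu]

lemma re_zb_pos (β : ℝ) {z : ℂ} (hz : ‖z‖ < 1) : 0 < (zb β z).re := by
  rw [re_zb]
  have h1 : Complex.normSq z < 1 := by
    rw [← Complex.sq_norm]
    nlinarith [norm_nonneg z]
  have h2 : 0 < Complex.normSq (qz β z) :=
    lt_of_le_of_ne (Complex.normSq_nonneg _) (Ne.symm ((normSq_qz β z).mpr (qz_ne β hz)))
  exact div_pos (by linarith) h2

lemma zm_Gi (β : ℝ) {z : ℂ} (hz : ‖z‖ < 1) : zm (Gi β z) = zb β z := by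
  have hre : (Gi β z).re = -(zb β z).im := by simp [Gi]
  have him : (Gi β z).im = -Real.log ((zb β z).re) := by simp [Gi]
  rw [zm, hre, him, neg_neg, Real.exp_log (re_zb_pos β hz)]
  simp [Complex.ext_iff]

lemma Gm_Gi (β : ℝ) {z : ℂ} (hz : ‖z‖ < 1) : Gm β (Gi β z) = z := by
  rw [Gm, zm_Gi β hz, zb]
  have hq := qz_ne β hz
  rw [qz] at hq ⊢
  set u := Complex.exp (-(I * β)) * z with hu
  have h2 : ((1 + u) / (1 - u) + 1) = 2 / (1 - u) := by field_simp; ring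
  have h2' : ((1 + u) / (1 - u) + 1) ≠ 0 := by
    rw [h2]; exact div_ne_zero two_ne_zero hq
  have hA : ((1 + u) / (1 - u) - 1) / ((1 + u) / (1 - u) + 1) = u := by
    rw [div_eq_iff h2']
    field_simp
    ring
  rw [hA, hu, ← mul_assoc, ← Complex.exp_add]
  simp

lemma zb_Gm (β : ℝ) (w : ℂ) : zb β (Gm β w) = zm w := by
  have h := zm_add_one_ne w
  rw [zb, qz_Gm]
  have hnum : 1 + Complex.exp (-(I * β)) * Gm β w = 2 * zm w / (zm w + 1) := by
    have hcancel : Complex.exp (-(I * ↑β)) * (Complex.exp (I * ↑β) * ((zm w - 1) / (zm w + 1)))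
        = (zm w - 1) / (zm w + 1) := by
      rw [← mul_assoc, exp_cancel, one_mul]
    rw [Gm, hcancel]
    field_simp
    ring
  rw [hnum]
  field_simp

lemma Gi_Gm (β : ℝ) (w : ℂ) : Gi β (Gm β w) = w := by
  rw [Gi, zb_Gm, zm_im, zm_re, neg_neg, Real.log_exp, neg_neg]
  exact Complex.re_add_im w

lemma Gm_injective (β : ℝ) : Function.Injective (Gm β) :=
  Function.LeftInverse.injective (Gi_Gm β)

lemma abs_Gm_lt (β : ℝ) (w : ℂ) : ‖Gm β w‖ < 1 := by
  have h1 := one_sub_normSq_Gm β w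
  have hN : 0 < Complex.normSq (zm w + 1) :=
    lt_of_le_of_ne (Complex.normSq_nonneg _)
      (Ne.symm (by simpa [Complex.normSq_eq_zero] using zm_add_one_ne w))
  have h2 : 0 < 4 * (zm w).re / Complex.normSq (zm w + 1) :=
    div_pos (by nlinarith [zm_re_pos w]) hN
  have h3 : Complex.normSq (Gm β w) < 1 := by linarith
  rw [← Complex.sq_norm] at h3
  nlinarith [norm_nonneg (Gm β w)]

lemma Gm_image (β : ℝ) : Gm β '' Set.univ = Metric.ball (0 : ℂ) 1 := by
  ext z
  constructor
  · rintro ⟨w, -, rfl⟩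
    simpa [Metric.mem_ball, Complex.dist_eq] using abs_Gm_lt β w
  · intro hz
    rw [Metric.mem_ball, dist_zero_right] at hz
    exact ⟨Gi β z, Set.mem_univ _, Gm_Gi β hz⟩

end Santalo

namespace Santalo
open Complex

lemma continuous_Gm (β : ℝ) : Continuous (Gm β) := by
  have hzm : Continuous zm := by
    apply Continuous.sub
    · exact Complex.continuous_ofReal.comp ((Real.continuous_exp).comp Complex.continuous_im.neg)
    · exact (Complex.continuous_ofReal.comp Complex.continuous_re).mul continuous_const
  apply continuous_const.mul
  exact (hzm.sub continuous_const).div (hzm.add continuous_const)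
    (fun w => zm_add_one_ne w)

lemma qz_Gm_ne (β : ℝ) (w : ℂ) : qz β (Gm β w) ≠ 0 := by
  rw [qz_Gm]
  exact div_ne_zero two_ne_zero (zm_add_one_ne w)

lemma continuous_VmGm (β : ℝ) : Continuous (fun w => Vm β (Gm β w)) := by
  have hG := continuous_Gm β
  have hq : Continuous (fun w => qz β (Gm β w)) :=
    continuous_const.sub (continuous_const.mul hG)
  apply Continuous.div
  · apply Continuous.mul
    · apply Continuous.mul
      · apply Continuous.neg
        apply Complex.continuous_ofReal.comp
        apply Continuous.div_const
        exact continuous_const.sub ((continuous_norm.comp hG).pow 2)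
      · exact continuous_const
    · exact hq
  · exact Complex.continuous_conj.comp hq
  · intro w
    simpa using qz_Gm_ne β w

lemma continuousOn_Gi (β : ℝ) : ContinuousOn (Gi β) (Metric.ball (0:ℂ) 1) := by
  have hball : ∀ z ∈ Metric.ball (0:ℂ) 1, ‖z‖ < 1 := by
    intro z hz
    rwa [Metric.mem_ball, dist_zero_right] at hz
  have hq : ContinuousOn (fun z => qz β z) (Metric.ball (0:ℂ) 1) :=
    (continuous_const.sub (continuous_const.mul continuous_id)).continuousOn
  have hzb : ContinuousOn (zb β) (Metric.ball (0:ℂ) 1) := by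
    apply ContinuousOn.div
    · exact (continuous_const.add (continuous_const.mul continuous_id)).continuousOn
    · exact hq
    · exact fun z hz => qz_ne β (hball z hz)
  have him : ContinuousOn (fun z => (zb β z).im) (Metric.ball (0:ℂ) 1) :=
    Complex.continuous_im.comp_continuousOn hzb
  have hre : ContinuousOn (fun z => (zb β z).re) (Metric.ball (0:ℂ) 1) :=
    Complex.continuous_re.comp_continuousOn hzb
  have hlog : ContinuousOn (fun z => Real.log ((zb β z).re)) (Metric.ball (0:ℂ) 1) := by
    apply Real.continuousOn_log.comp hre
    intro z hz
    exact ne_of_gt (re_zb_pos β (hball z hz))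
  apply ContinuousOn.add
  · exact Complex.continuous_ofReal.comp_continuousOn him.neg
  · exact (Complex.continuous_ofReal.comp_continuousOn hlog.neg).mul continuousOn_const

lemma Dd_Gm_pos (β : ℝ) (w : ℂ) : 0 < Dd β (Gm β w) := by
  rw [Dd_Gm]
  have hN : 0 < Complex.normSq (zm w + 1) :=
    lt_of_le_of_ne (Complex.normSq_nonneg _)
      (Ne.symm (by simpa [Complex.normSq_eq_zero] using zm_add_one_ne w))
  have := zm_re_pos w
  positivity

/-- fixed-β change of variables -/
lemma inner_eq (f : ℂ × ℂ → ℝ) (hf : Continuous f)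
    (K : Set ℂ) (hK : IsCompact K) (hK1 : K ⊆ Metric.ball 0 1)
    (hsupp : Function.support f ⊆ K ×ˢ (Set.univ : Set ℂ)) (β : ℝ) :
    (∫ a : ℝ, ∫ t : ℝ, f (γH β a t, deriv (γH β a) t))
      = ∫ z in Metric.ball (0:ℂ) 1, (Dd β z)⁻¹ * f (z, Vm β z) := by
  set F : ℂ → ℝ := fun w => f (Gm β w, Vm β (Gm β w)) with hF
  have hmemK : ∀ x : ℂ × ℂ, f x ≠ 0 → x.1 ∈ K := by
    intro x hx
    exact (Set.mem_prod.mp (hsupp (Function.mem_support.mpr hx))).1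
  -- continuity and compact support of F
  have hFcont : Continuous F :=
    hf.comp ((continuous_Gm β).prodMk (continuous_VmGm β))
  have hGiK : IsCompact (Gi β '' K) :=
    hK.image_of_continuousOn ((continuousOn_Gi β).mono hK1)
  have hFsupp : HasCompactSupport F := by
    apply HasCompactSupport.intro hGiK
    intro w hw
    by_contra hne
    apply hw
    have hGmK : Gm β w ∈ K := hmemK _ hne
    exact ⟨Gm β w, hGmK, Gi_Gm β w⟩
  have hFInt : Integrable F := hFcont.integrable_of_hasCompactSupport hFsupp
  -- step 1: iterated integral equals integral over ℂ
  have step1 : (∫ a : ℝ, ∫ t : ℝ, f (γH β a t, deriv (γH β a) t)) = ∫ w : ℂ, F w := by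
    have heq : ∀ a t : ℝ, f (γH β a t, deriv (γH β a) t) = F ((a : ℂ) + (t : ℂ) * I) := by
      intro a t
      rw [hF]
      rw [deriv_gamma_eq_Vm, gamma_eq]
    have h2 : (∫ w : ℂ, F w)
        = ∫ p : ℝ × ℝ, F ((p.1 : ℂ) + (p.2 : ℂ) * I) := by
      rw [← (Complex.volume_preserving_equiv_real_prod.symm).integral_comp
        Complex.measurableEquivRealProd.symm.measurableEmbedding F]
      congr 1
      funext p
      congr 1
      simp [Complex.measurableEquivRealProd, Complex.ext_iff]
    rw [h2]
    have hint2 : Integrable (fun p : ℝ × ℝ => F ((p.1 : ℂ) + (p.2 : ℂ) * I)) := by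
      apply Continuous.integrable_of_hasCompactSupport
      · exact hFcont.comp (by continuity)
      · apply HasCompactSupport.intro
          (hGiK.image (continuous_re.prodMk continuous_im))
        intro p hp
        by_contra hne
        apply hp
        have hGmK : Gm β ((p.1 : ℂ) + (p.2 : ℂ) * I) ∈ K := hmemK _ hne
        refine ⟨(p.1 : ℂ) + (p.2 : ℂ) * I, ⟨Gm β _, hGmK, Gi_Gm β _⟩, ?_⟩
        simp
    rw [MeasureTheory.Measure.volume_eq_prod] at hint2 ⊢
    rw [MeasureTheory.integral_prod _ hint2]
    congr 1
    funext a
    congr 1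
    funext t
    exact heq a t
  -- step 2: change of variables
  have hdet : ∀ w : ℂ, w ∈ (Set.univ : Set ℂ) →
      HasFDerivWithinAt (Gm β) (DGm β w) Set.univ w :=
    fun w _ => (hasFDerivAt_Gm β w).hasFDerivWithinAt
  have step2 := MeasureTheory.integral_image_eq_integral_abs_det_fderiv_smul
    (μ := volume) MeasurableSet.univ hdet ((Gm_injective β).injOn)
    (fun z => (Dd β z)⁻¹ * f (z, Vm β z))
  rw [Gm_image β] at step2
  rw [step1, step2, MeasureTheory.setIntegral_univ]
  congr 1
  funext w
  rw [abs_det_DGm]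
  have hpos := Dd_Gm_pos β w
  rw [smul_eq_mul, ← mul_assoc, mul_inv_cancel₀ (ne_of_gt hpos), one_mul]

end Santalo

namespace Santalo
open Complex

def Th (z : ℂ) (β : ℝ) : ℝ := β + Real.pi + 2 * Real.arctan ((qz β z).im / (qz β z).re)

lemma normSq_u (β : ℝ) (z : ℂ) :
    Complex.normSq (Complex.exp (-(I * β)) * z) = Complex.normSq z := by
  rw [Complex.normSq_mul, ← Complex.sq_norm (Complex.exp _), abs_exp_neg_I]
  norm_num

lemma re_qz_pos (β : ℝ) {z : ℂ} (hz : ‖z‖ < 1) : 0 < (qz β z).re := by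
  have h1 : ‖Complex.exp (-(I * β)) * z‖ < 1 := by
    rw [norm_mul, abs_exp_neg_I, one_mul]; exact hz
  have h2 := Complex.abs_re_le_norm (Complex.exp (-(I * β)) * z)
  have h4 : (Complex.exp (-(I * β)) * z).re < 1 :=
    lt_of_le_of_lt (le_trans (le_abs_self _) h2) h1
  rw [qz]
  simp only [Complex.sub_re, Complex.one_re]
  linarith

lemma normSq_qz_pos (β : ℝ) {z : ℂ} (hz : ‖z‖ < 1) :
    0 < Complex.normSq (qz β z) :=
  lt_of_le_of_ne (Complex.normSq_nonneg _)
    (Ne.symm ((normSq_qz β z).mpr (qz_ne β hz)))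

lemma key_id (β : ℝ) (z : ℂ) :
    (1 : ℝ) - Complex.normSq z = 2 * (qz β z).re - Complex.normSq (qz β z) := by
  have hu := normSq_u β z
  rw [qz, ← hu]
  set u := Complex.exp (-(I * β)) * z
  simp only [Complex.normSq_apply, Complex.sub_re, Complex.sub_im, Complex.one_re,
    Complex.one_im]
  ring

lemma hasDerivAt_qz (z : ℂ) (β : ℝ) :
    HasDerivAt (fun β : ℝ => qz β z) (I * Complex.exp (-(I * β)) * z) β := by
  have h0 : HasDerivAt (fun β : ℝ => ((β : ℝ) : ℂ)) 1 β := (hasDerivAt_id β).ofReal_comp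
  have h1 : HasDerivAt (fun β : ℝ => -(I * (β : ℂ))) (-I) β := by
    have h := (h0.const_mul I).neg; simp only [mul_one] at h; exact h
  have h2 := h1.cexp
  have h3 := (h2.mul_const z).const_sub 1
  refine h3.congr_deriv ?_
  ring

lemma hasDerivAt_Th {z : ℂ} (hz : ‖z‖ < 1) (β : ℝ) :
    HasDerivAt (Th z) ((1 - Complex.normSq z) / Complex.normSq (qz β z)) β := by
  have hrepos := re_qz_pos β hz
  have hre_ne : (qz β z).re ≠ 0 := ne_of_gt hrepos
  have hq := hasDerivAt_qz z β
  have hre : HasDerivAt (fun β : ℝ => (qz β z).re) ((I * Complex.exp (-(I * β)) * z).re) β :=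
    Complex.reCLM.hasFDerivAt.comp_hasDerivAt β hq
  have him : HasDerivAt (fun β : ℝ => (qz β z).im) ((I * Complex.exp (-(I * β)) * z).im) β :=
    Complex.imCLM.hasFDerivAt.comp_hasDerivAt β hq
  have hquot := him.div hre hre_ne
  have harc := (Real.hasDerivAt_arctan ((qz β z).im / (qz β z).re)).comp β hquot
  have hTh : HasDerivAt (Th z)
      (1 + 2 * (1 / (1 + ((qz β z).im / (qz β z).re) ^ 2) *
        (((I * Complex.exp (-(I * β)) * z).im * (qz β z).re -
          (qz β z).im * (I * Complex.exp (-(I * β)) * z).re) / (qz β z).re ^ 2))) β := by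
    have := ((hasDerivAt_id β).add_const Real.pi).add (harc.const_mul 2)
    refine this.congr_deriv ?_
    try ring
  convert hTh using 1
  -- now the real computation
  have hderiv : Complex.exp (-(I * β)) * z = 1 - qz β z := by
    rw [qz]; ring
  have hre' : (I * Complex.exp (-(I * β)) * z).re = (qz β z).im := by
    rw [mul_assoc, hderiv]
    simp [Complex.mul_re]
  have him' : (I * Complex.exp (-(I * β)) * z).im = 1 - (qz β z).re := by
    rw [mul_assoc, hderiv]
    simp [Complex.mul_im]
  rw [hre', him']
  have hkey := key_id β z
  have hNq : Complex.normSq (qz β z) = (qz β z).re ^ 2 + (qz β z).im ^ 2 := by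
    rw [Complex.normSq_apply]; ring
  rw [hkey, hNq]
  have h1 : (qz β z).re ^ 2 + (qz β z).im ^ 2 > 0 := by positivity
  field_simp
  try ring

lemma Vm_eq_exp {z : ℂ} (hz : ‖z‖ < 1) (β : ℝ) :
    Vm β z = (((1 - ‖z‖ ^ 2) / 2 : ℝ) : ℂ) * Complex.exp (I * ((Th z β : ℝ) : ℂ)) := by
  have hrepos := re_qz_pos β hz
  have hre_ne : (qz β z).re ≠ 0 := ne_of_gt hrepos
  have hNq : Complex.normSq (qz β z) = (qz β z).re ^ 2 + (qz β z).im ^ 2 := by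
    rw [Complex.normSq_apply]; ring
  have hNqpos := normSq_qz_pos β hz
  set φ := Real.arctan ((qz β z).im / (qz β z).re) with hφ
  have hv2 : 1 + ((qz β z).im / (qz β z).re) ^ 2 > 0 := by positivity
  have hc2 : Real.cos φ ^ 2 = 1 / (1 + ((qz β z).im / (qz β z).re) ^ 2) := by
    rw [hφ]; exact Real.cos_sq_arctan _
  have hcos : Real.cos (2 * φ) =
      ((qz β z).re ^ 2 - (qz β z).im ^ 2) / Complex.normSq (qz β z) := by
    rw [Real.cos_two_mul, hc2, hNq]
    field_simp
    ring
  have hsin : Real.sin (2 * φ) =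
      (2 * (qz β z).re * (qz β z).im) / Complex.normSq (qz β z) := by
    have hcpos : 0 < Real.cos φ := by rw [hφ]; exact Real.cos_arctan_pos _
    have hsc : Real.sin φ = ((qz β z).im / (qz β z).re) * Real.cos φ := by
      have ht : Real.tan φ = (qz β z).im / (qz β z).re := by
        rw [hφ]; exact Real.tan_arctan _
      rw [← ht, Real.tan_eq_sin_div_cos]
      field_simp
    rw [Real.sin_two_mul, hsc, hNq]
    have hx : 2 * (((qz β z).im / (qz β z).re) * Real.cos φ) * Real.cos φ
        = 2 * ((qz β z).im / (qz β z).re) * (Real.cos φ ^ 2) := by ring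
    rw [hx, hc2]
    field_simp
  -- exp (I * Th) = exp(Iβ) * (-1) * (q^2 / Nq)
  have hexp2 : Complex.exp (I * ((2 * φ : ℝ) : ℂ))
      = (qz β z) ^ 2 / ((Complex.normSq (qz β z) : ℝ) : ℂ) := by
    rw [mul_comm I, Complex.exp_mul_I]
    rw [← Complex.ofReal_cos, ← Complex.ofReal_sin, hcos, hsin]
    rw [eq_div_iff (by exact_mod_cast ne_of_gt hNqpos)]
    apply Complex.ext
    · simp only [Complex.add_re, Complex.mul_re, Complex.mul_im, Complex.ofReal_re,
        Complex.ofReal_im, Complex.I_re, Complex.I_im, pow_two]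
      field_simp
      try ring
    · simp only [Complex.add_im, Complex.mul_re, Complex.mul_im, Complex.ofReal_re,
        Complex.ofReal_im, Complex.I_re, Complex.I_im, pow_two]
      field_simp
      try ring
  have hTh : ((Th z β : ℝ) : ℂ) = (β : ℂ) + (Real.pi : ℂ) + ((2 * φ : ℝ) : ℂ) := by
    rw [Th, ← hφ]
    push_cast
    ring
  have hexpTh : Complex.exp (I * ((Th z β : ℝ) : ℂ))
      = Complex.exp (I * β) * (-1) * ((qz β z) ^ 2 / ((Complex.normSq (qz β z) : ℝ) : ℂ)) := by
    rw [hTh, mul_add, mul_add, Complex.exp_add, Complex.exp_add, hexp2]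
    have hpi : Complex.exp (I * (Real.pi : ℂ)) = -1 := by
      rw [mul_comm]; exact Complex.exp_pi_mul_I
    rw [hpi]
  rw [hexpTh, Vm]
  have hqne := qz_ne β hz
  have hcne : (starRingEnd ℂ) (qz β z) ≠ 0 := by
    intro hcc
    apply hqne
    have := congrArg (starRingEnd ℂ) hcc
    simpa using this
  have hmc : ((Complex.normSq (qz β z) : ℝ) : ℂ) = qz β z * (starRingEnd ℂ) (qz β z) :=
    (Complex.mul_conj _).symm
  rw [hmc]
  field_simp

lemma Th_shift (z : ℂ) : Th z (2 * Real.pi) = Th z 0 + 2 * Real.pi := by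
  have hq : qz (2 * Real.pi) z = qz 0 z := by
    rw [qz, qz]
    congr 2
    have : (-(I * ((2 * Real.pi : ℝ) : ℂ))) = ((-1 : ℤ) : ℂ) * (2 * Real.pi * I) := by
      push_cast; ring
    rw [this, Complex.exp_int_mul_two_pi_mul_I]
    norm_num
  rw [Th, Th, hq]
  ring

end Santalo

namespace Santalo
open Complex

lemma beta_integral (f : ℂ × ℂ → ℝ) (hf : Continuous f) {z : ℂ} (hz : ‖z‖ < 1) :
    (∫ β in (0:ℝ)..(2*Real.pi), (Dd β z)⁻¹ * f (z, Vm β z))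
      = (2 / (1 - ‖z‖ ^ 2)) ^ 2 *
          ∫ θ in (0:ℝ)..(2*Real.pi),
            f (z, (((1 - ‖z‖ ^ 2) / 2 : ℝ) : ℂ) * Complex.exp (I * (θ : ℂ))) := by
  have hs : ‖z‖ ^ 2 = Complex.normSq z := Complex.sq_norm z
  have hsne : (1 : ℝ) - ‖z‖ ^ 2 ≠ 0 := by nlinarith [norm_nonneg z]
  set h : ℝ → ℝ :=
    fun θ => f (z, (((1 - ‖z‖ ^ 2) / 2 : ℝ) : ℂ) * Complex.exp (I * (θ : ℂ))) with hh
  have hhcont : Continuous h := by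
    apply hf.comp
    apply Continuous.prodMk continuous_const
    exact continuous_const.mul
      (Complex.continuous_exp.comp (continuous_const.mul Complex.continuous_ofReal))
  have heq : ∀ β, (Dd β z)⁻¹ * f (z, Vm β z)
      = (2 / (1 - ‖z‖ ^ 2)) ^ 2 *
        (((1 - Complex.normSq z) / Complex.normSq (qz β z)) • h (Th z β)) := by
    intro β
    have hNq := normSq_qz_pos β hz
    have hfeq : f (z, Vm β z) = h (Th z β) := by
      simp only [hh]
      rw [Vm_eq_exp hz β]
    rw [hfeq, Dd, smul_eq_mul, ← hs]
    field_simp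
    ring
  rw [intervalIntegral.integral_congr (fun β _ => heq β), intervalIntegral.integral_const_mul]
  congr 1
  have hcontD : ContinuousOn (fun β => (1 - Complex.normSq z) / Complex.normSq (qz β z))
      (Set.uIcc 0 (2*Real.pi)) := by
    apply ContinuousOn.div continuousOn_const
    · apply Continuous.continuousOn
      apply Complex.continuous_normSq.comp
      exact continuous_const.sub
        ((Complex.continuous_exp.comp
          ((continuous_const.mul Complex.continuous_ofReal).neg)).mul continuous_const)
    · exact fun β _ => ne_of_gt (normSq_qz_pos β hz)
  have hcov := intervalIntegral.integral_comp_smul_deriv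
    (fun β (_ : β ∈ Set.uIcc 0 (2*Real.pi)) => hasDerivAt_Th hz β) hcontD hhcont
  simp only [Function.comp] at hcov
  rw [hcov, Th_shift]
  have hper : Function.Periodic h (2 * Real.pi) := by
    intro θ
    simp only [hh]
    have hexp : Complex.exp (I * ((θ + 2*Real.pi : ℝ) : ℂ)) = Complex.exp (I * (θ : ℂ)) := by
      push_cast
      rw [mul_add, Complex.exp_add]
      rw [mul_comm I ((2:ℂ) * Real.pi), Complex.exp_two_pi_mul_I, mul_one]
    rw [hexp]
  have hsh := hper.intervalIntegral_add_eq (Th z 0) 0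
  rw [zero_add] at hsh
  exact hsh

end Santalo

namespace Santalo
open Complex

lemma abs_Vm_le (β : ℝ) {z : ℂ} (hz : ‖z‖ ≤ 1) : ‖Vm β z‖ ≤ 1 := by
  rw [Vm]
  by_cases hq : qz β z = 0
  · simp [hq]
  · rw [norm_div, norm_mul, norm_mul]
    have h1 : ‖Complex.exp (I * β)‖ = 1 := by rw [Complex.norm_exp]; simp
    have h2 : ‖(starRingEnd ℂ) (qz β z)‖ = ‖qz β z‖ :=
      Complex.norm_conj _
    have h3 : ‖qz β z‖ ≠ 0 := by simpa using hq
    have h4 : ‖-(((1 - ‖z‖ ^ 2) / 2 : ℝ) : ℂ)‖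
        = |(1 - ‖z‖ ^ 2) / 2| := by
      rw [norm_neg, Complex.norm_real, Real.norm_eq_abs]
    rw [h1, h2, h4, mul_one, mul_div_assoc, div_self h3, mul_one]
    rw [_root_.abs_of_nonneg (by nlinarith [norm_nonneg z] :
      (0:ℝ) ≤ (1 - ‖z‖ ^ 2) / 2)]
    nlinarith [norm_nonneg z]

lemma measurable_g (f : ℂ × ℂ → ℝ) (hf : Continuous f) :
    Measurable (fun p : ℝ × ℂ => (Dd p.1 p.2)⁻¹ * f (p.2, Vm p.1 p.2)) := by
  have hq : Continuous (fun p : ℝ × ℂ => qz p.1 p.2) := by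
    apply continuous_const.sub
    exact (Complex.continuous_exp.comp
      ((continuous_const.mul (Complex.continuous_ofReal.comp continuous_fst)).neg)).mul
      continuous_snd
  have hDd : Continuous (fun p : ℝ × ℂ => Dd p.1 p.2) := by
    apply Continuous.div_const
    exact (continuous_const.sub (Complex.continuous_normSq.comp continuous_snd)).mul
      (Complex.continuous_normSq.comp hq)
  have hnum : Continuous (fun p : ℝ × ℂ =>
      -(((1 - ‖p.2‖ ^ 2) / 2 : ℝ) : ℂ) * Complex.exp (I * p.1) * qz p.1 p.2) := by
    apply Continuous.mul _ hq
    apply Continuous.mul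
    · apply Continuous.neg
      exact Complex.continuous_ofReal.comp
        ((continuous_const.sub ((continuous_norm.comp continuous_snd).pow 2)).div_const 2)
    · exact Complex.continuous_exp.comp
        (continuous_const.mul (Complex.continuous_ofReal.comp continuous_fst))
  have hVm : Measurable (fun p : ℝ × ℂ => Vm p.1 p.2) := by
    have : (fun p : ℝ × ℂ => Vm p.1 p.2) = fun p =>
        (-(((1 - ‖p.2‖ ^ 2) / 2 : ℝ) : ℂ) * Complex.exp (I * p.1) * qz p.1 p.2)
          / (starRingEnd ℂ) (qz p.1 p.2) := by
      funext p; rw [Vm]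
    rw [this]
    exact hnum.measurable.div (Complex.continuous_conj.comp hq).measurable
  exact (hDd.measurable.inv).mul
    (hf.measurable.comp (measurable_snd.prodMk hVm))

end Santalo

open Santalo Complex

/-- Santaló's formula in horocyclic coordinates: for every continuous `f : ℂ × ℂ → ℝ`
supported in `K × ℂ` with `K` compact inside the open unit disk,
`∫₀^{2π} ∫_ℝ ∫_ℝ f(γ_{β,a}(t), γ′_{β,a}(t)) dt da dβ
 = ∫_{|z|<1} (2/(1−|z|²))² ∫₀^{2π} f(z, ((1−|z|²)/2)·e^{iθ}) dθ dλ(z)`. -/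
theorem santalo_horocyclic (f : ℂ × ℂ → ℝ) (hf : Continuous f)
    (K : Set ℂ) (hK : IsCompact K) (hK1 : K ⊆ Metric.ball 0 1)
    (hsupp : Function.support f ⊆ K ×ˢ (Set.univ : Set ℂ)) :
    (∫ β in (0 : ℝ)..(2 * Real.pi), ∫ a : ℝ, ∫ t : ℝ,
        f (γH β a t, deriv (γH β a) t)) =
      ∫ z in Metric.ball (0 : ℂ) 1,
        (2 / (1 - ‖z‖ ^ 2)) ^ 2 *
          ∫ θ in (0 : ℝ)..(2 * Real.pi),
            f (z, (((1 - ‖z‖ ^ 2) / 2 : ℝ) : ℂ) *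
              Complex.exp (Complex.I * (θ : ℂ))) := by
  classical
  rcases K.eq_empty_or_nonempty with hKe | hKne
  · have hf0 : ∀ x, f x = 0 := by
      intro x
      by_contra hx
      have h := hsupp (Function.mem_support.mpr hx)
      rw [hKe] at h
      simpa using h
    simp only [hf0]
    simp
  set g : ℝ → ℂ → ℝ := fun β z => (Dd β z)⁻¹ * f (z, Vm β z) with hg
  have hmemK : ∀ x : ℂ × ℂ, f x ≠ 0 → x.1 ∈ K := by
    intro x hx
    exact (Set.mem_prod.mp (hsupp (Function.mem_support.mpr hx))).1
  -- bound setup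
  obtain ⟨z₀, hz₀K, hz₀max⟩ := hK.exists_isMaxOn hKne continuous_norm.continuousOn
  set r : ℝ := ‖z₀‖ with hr
  have hr1 : r < 1 := by
    have := hK1 hz₀K
    rwa [Metric.mem_ball, dist_zero_right] at this
  have hr0 : 0 ≤ r := norm_nonneg _
  have hrK : ∀ z ∈ K, ‖z‖ ≤ r := fun z hz => hz₀max hz
  set δ : ℝ := (1 - r^2) * (1 - r)^2 / 4 with hδdef
  have hδ : 0 < δ := by
    have h1 : 0 < 1 - r := by linarith
    have h2 : 0 < 1 - r^2 := by nlinarith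
    positivity
  have hDd_lb : ∀ (β : ℝ) (z : ℂ), z ∈ K → δ ≤ Dd β z := by
    intro β z hzK
    have h1 : ‖z‖ ≤ r := hrK z hzK
    have h2 : (1 : ℝ) - r ≤ ‖qz β z‖ := by
      have h3 := norm_sub_norm_le (1 : ℂ) (Complex.exp (-(I * β)) * z)
      rw [qz]
      have h4 : ‖Complex.exp (-(I * β)) * z‖ = ‖z‖ := by
        rw [norm_mul, abs_exp_neg_I, one_mul]
      simp only [norm_one] at h3
      rw [h4] at h3
      calc (1:ℝ) - r ≤ 1 - ‖z‖ := by linarith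
        _ ≤ ‖1 - Complex.exp (-(I * β)) * z‖ := h3
    have h5 : Complex.normSq z ≤ r^2 := by
      rw [← Complex.sq_norm]
      nlinarith [norm_nonneg z]
    have h6 : (1 - r)^2 ≤ Complex.normSq (qz β z) := by
      rw [← Complex.sq_norm]
      nlinarith [norm_nonneg (qz β z)]
    rw [Dd, hδdef]
    have h7 : 0 ≤ 1 - r := by linarith
    have h8 : 1 - r^2 ≤ 1 - Complex.normSq z := by linarith
    have h9 : (0:ℝ) ≤ 1 - Complex.normSq z := by nlinarith
    have h10 : (1 - r^2) * (1 - r)^2 ≤ (1 - Complex.normSq z) * Complex.normSq (qz β z) :=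
      mul_le_mul h8 h6 (sq_nonneg _) h9
    linarith
  obtain ⟨M, hM⟩ := (hK.prod (isCompact_closedBall (0:ℂ) 1)).exists_bound_of_continuousOn
    hf.continuousOn
  have hM0 : 0 ≤ M := le_trans (norm_nonneg _) (hM (z₀, 0) (by
    refine Set.mem_prod.mpr ⟨hz₀K, ?_⟩
    simp))
  set C : ℝ := δ⁻¹ * M with hC
  have hC0 : 0 ≤ C := mul_nonneg (inv_nonneg.mpr hδ.le) hM0
  have hbound : ∀ (β : ℝ) (z : ℂ), |g β z| ≤ C := by
    intro β z
    by_cases hzK : z ∈ K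
    · have hz1 : ‖z‖ ≤ 1 := le_trans (hrK z hzK) hr1.le
      have hDd1 := hDd_lb β z hzK
      have hDdpos : 0 < Dd β z := lt_of_lt_of_le hδ hDd1
      have hfb : |f (z, Vm β z)| ≤ M := by
        have hmem : (z, Vm β z) ∈ K ×ˢ Metric.closedBall (0:ℂ) 1 := by
          refine Set.mem_prod.mpr ⟨hzK, ?_⟩
          rw [Metric.mem_closedBall, dist_zero_right]
          exact abs_Vm_le β hz1
        simpa using hM _ hmem
      rw [hg, abs_mul, _root_.abs_of_nonneg (inv_nonneg.mpr hDdpos.le)]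
      calc (Dd β z)⁻¹ * |f (z, Vm β z)| ≤ δ⁻¹ * M := by
            apply mul_le_mul _ hfb (abs_nonneg _) (inv_nonneg.mpr hδ.le)
            exact inv_anti₀ hδ hDd1
        _ = C := rfl
    · have : f (z, Vm β z) = 0 := by
        by_contra hne
        exact hzK (hmemK _ hne)
      rw [hg]
      simp only [this, mul_zero, abs_zero]
      exact hC0
  -- integrability for Fubini
  have hfin1 : IsFiniteMeasure (volume.restrict (Set.Ioc (0:ℝ) (2*Real.pi))) := by
    constructor
    rw [Measure.restrict_apply_univ]
    simp [Real.volume_Ioc]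
    exact ENNReal.mul_lt_top ENNReal.ofNat_lt_top ENNReal.ofReal_lt_top
  have hfin2 : IsFiniteMeasure (volume.restrict (Metric.ball (0:ℂ) 1)) := by
    constructor
    rw [Measure.restrict_apply_univ]
    exact measure_ball_lt_top
  have hInt : MeasureTheory.Integrable (Function.uncurry g)
      ((volume.restrict (Set.Ioc (0:ℝ) (2*Real.pi))).prod
        (volume.restrict (Metric.ball (0:ℂ) 1))) := by
    constructor
    · exact ((measurable_g f hf).comp measurable_id).aestronglyMeasurable
    · apply MeasureTheory.HasFiniteIntegral.of_bounded (C := C)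
      apply Filter.Eventually.of_forall
      intro p
      exact hbound p.1 p.2
  -- assembly
  have step1 : (∫ β in (0 : ℝ)..(2 * Real.pi), ∫ a : ℝ, ∫ t : ℝ,
        f (γH β a t, deriv (γH β a) t))
      = ∫ β in (0 : ℝ)..(2 * Real.pi), ∫ z in Metric.ball (0:ℂ) 1, g β z :=
    intervalIntegral.integral_congr (fun β _ => inner_eq f hf K hK hK1 hsupp β)
  rw [step1, intervalIntegral.integral_of_le Real.two_pi_pos.le]
  rw [MeasureTheory.integral_integral_swap hInt]
  apply MeasureTheory.setIntegral_congr_fun measurableSet_ball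
  intro z hz
  have hzlt : ‖z‖ < 1 := by
    rwa [Metric.mem_ball, dist_zero_right] at hz
  show (∫ β in Set.Ioc (0:ℝ) (2*Real.pi), g β z)
      = (2 / (1 - ‖z‖ ^ 2)) ^ 2 *
          ∫ θ in (0:ℝ)..(2*Real.pi),
            f (z, (((1 - ‖z‖ ^ 2) / 2 : ℝ) : ℂ) * Complex.exp (I * (θ : ℂ)))
  rw [← intervalIntegral.integral_of_le Real.two_pi_pos.le]
  exact beta_integral f hf hzlt
end
end

section
/- Weighted Euclidean X-ray transform factorization: fix γ > −1. For every continuous function f : ℂ → ℝ on the closed unit disk, every β ∈ ℝ, and every α ∈ (−π/2, π/2): (i) d(γ^E_{β,α}(u)) = cos²α − u² for all u ∈ ℝ; and (ii) ∫_{−cos α}^{cos α} (cos²α − u²)^γ · f(γ^E_{β,α}(u)) du = (cos α)^{2γ+1} · ∫_{−1}^{1} (1 − t²)^γ · f( e^{i(β+π+α)}·(t·cos α + i·sin α) ) dt; in particular I₀^E d^γ f (β,α) = μ^{2γ+1}(β,α) times a quantity extending smoothly across α = ±π/2. -/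
open MeasureTheory

noncomputable section

/-- `d(z) = 1 − |z|²`. -/
def dE (z : ℂ) : ℝ := 1 - ‖z‖ ^ 2

/-- Weighted Euclidean X-ray transform factorization: for `γ > −1`, continuous `f`, and
`α ∈ (−π/2, π/2)`: (i) `d(γ^E_{β,α}(u)) = cos²α − u²`; and (ii)
`∫_{−cos α}^{cos α} (cos²α − u²)^γ f(γ^E_{β,α}(u)) du
 = (cos α)^{2γ+1} ∫_{−1}^{1} (1 − t²)^γ f(e^{i(β+π+α)}(t·cos α + i·sin α)) dt`. -/
theorem euclidean_xray_factorization (γ : ℝ) (hγ : -1 < γ) (f : ℂ → ℝ) (hf : Continuous f)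
    (β α : ℝ) (hα : α ∈ Set.Ioo (-(Real.pi / 2)) (Real.pi / 2)) :
    (∀ u : ℝ, dE (γE β α u) = Real.cos α ^ 2 - u ^ 2) ∧
    (∫ u in (-(Real.cos α))..(Real.cos α),
        (Real.cos α ^ 2 - u ^ 2) ^ γ * f (γE β α u)) =
      Real.cos α ^ (2 * γ + 1) *
        ∫ t in (-1 : ℝ)..1,
          (1 - t ^ 2) ^ γ *
            f (Complex.exp (Complex.I * ((β + Real.pi + α : ℝ) : ℂ)) *
              (((t * Real.cos α : ℝ) : ℂ) + Complex.I * ((Real.sin α : ℝ) : ℂ))) := by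
  have hc : 0 < Real.cos α := Real.cos_pos_of_mem_Ioo hα
  set c := Real.cos α with hcdef
  have hsc : Real.sin α ^ 2 + c ^ 2 = 1 := Real.sin_sq_add_cos_sq α
  constructor
  · intro u
    simp only [dE, γE, norm_mul]
    have habs : ‖Complex.exp (Complex.I * ((β + α + Real.pi : ℝ) : ℂ))‖ = 1 := by
      rw [Complex.norm_exp]
      simp
    rw [habs, one_mul]
    have h2 : ‖(u : ℂ) + Complex.I * ((Real.sin α : ℝ) : ℂ)‖ ^ 2
        = u ^ 2 + Real.sin α ^ 2 := by
      rw [Complex.sq_norm, Complex.normSq_apply]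
      simp [pow_two, Complex.sin_ofReal_re]
    rw [h2]
    linarith
  · set G : ℝ → ℝ := fun u => (1 - (u / c) ^ 2) ^ γ * f (γE β α u) with hG
    have hexp : (β + Real.pi + α : ℝ) = (β + α + Real.pi) := by ring
    have hfun : ∀ t : ℝ,
        (1 - t ^ 2) ^ γ *
            f (Complex.exp (Complex.I * ((β + Real.pi + α : ℝ) : ℂ)) *
              (((t * c : ℝ) : ℂ) + Complex.I * ((Real.sin α : ℝ) : ℂ))) = G (t * c) := by
      intro t
      simp only [hG, γE, hexp, mul_div_assoc]
      rw [div_self hc.ne', mul_one]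
    have hcongr1 : (∫ t in (-1 : ℝ)..1,
        (1 - t ^ 2) ^ γ *
            f (Complex.exp (Complex.I * ((β + Real.pi + α : ℝ) : ℂ)) *
              (((t * c : ℝ) : ℂ) + Complex.I * ((Real.sin α : ℝ) : ℂ))))
        = ∫ t in (-1 : ℝ)..1, G (t * c) :=
      intervalIntegral.integral_congr (fun t _ => hfun t)
    rw [hcongr1, intervalIntegral.integral_comp_mul_right G hc.ne']
    have hbounds1 : (-1 : ℝ) * c = -c := by ring
    have hbounds2 : (1 : ℝ) * c = c := by ring
    rw [hbounds1, hbounds2, smul_eq_mul, ← mul_assoc]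
    have hpow : c ^ (2 * γ + 1) * c⁻¹ = (c ^ 2) ^ γ := by
      rw [Real.rpow_add hc, Real.rpow_one, mul_assoc, mul_inv_cancel₀ hc.ne', mul_one,
        ← Real.rpow_natCast c 2, ← Real.rpow_mul hc.le]
      norm_num [mul_comm]
    rw [hpow, ← intervalIntegral.integral_const_mul]
    refine intervalIntegral.integral_congr fun u hu => ?_
    rw [Set.uIcc_of_le (by linarith : -c ≤ c)] at hu
    obtain ⟨hu1, hu2⟩ := hu
    have hle : 0 ≤ 1 - (u / c) ^ 2 := by
      rw [div_pow, sub_nonneg, div_le_one (by positivity)]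
      nlinarith
    simp only [hG, ← mul_assoc]
    congr 1
    rw [← Real.mul_rpow (sq_nonneg c) hle]
    congr 1
    field_simp
end
end
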